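/- arXiv:0810.5587 — 10 statements merged into one kernel-verified Lean document; each statement's English description precedes it below -/
import Mathlib

section
/- For every ultrafilter D on a set I and all infinite cardinals κ and ν, |∏_D ν^κ| ≤ |∏_D ν^{<κ}|^{cf(∏_D ⟨κ,<⟩)}. -/
universe u

open Cardinal

namespace Paper

/-- Form I: the ultrafilter `D` is `(a, b)`-regular: there is a family of `b`-many
members of `D` such that the intersection of any `a`-many of them is empty. -/
def IsRegularUF {I : Type u} (D : Ultrafilter I) (a b : Cardinal.{u}) : Prop :=
  ∃ X : b.out → Set I, (∀ β, X β ∈ D) ∧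
    ∀ B : Set b.out, #B = a → ⋂ β ∈ B, X β = ∅

/-- `D` is `κ`-decomposable: there is `f : I → κ` such that the preimage of any
subset of size `< κ` is not in `D`. -/
def IsDecomposable {I : Type u} (D : Ultrafilter I) (κ : Cardinal.{u}) : Prop :=
  ∃ f : I → κ.out, ∀ X : Set κ.out, #X < κ → f ⁻¹' X ∉ D

/-- The cardinality of the ultrapower `∏_D c` of a cardinal `c` modulo `D`. -/
noncomputable def ultraPowCard {I : Type u} (D : Ultrafilter I) (c : Cardinal.{u}) :
    Cardinal.{u} :=
  #((D : Filter I).Germ c.out)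

/-- The cofinality of the linearly ordered ultrapower `∏_D ⟨κ, <⟩`:
the least cardinality of a cofinal subset. -/
noncomputable def germOrderCof {I : Type u} (D : Ultrafilter I) (κ : Cardinal.{u}) :
    Cardinal.{u} :=
  sInf { c | ∃ S : Set ((D : Filter I).Germ κ.ord.ToType), #S = c ∧ ∀ x, ∃ y ∈ S, x ≤ y }

/-- `f` is a `κ`-least function for `D`. -/
def IsKLeastFunction {I : Type u} (D : Ultrafilter I) (κ : Cardinal.{u})
    (f : I → Ordinal.{u}) : Prop :=
  (∀ i, f i < κ.ord) ∧
  (∀ α < κ.ord, { i | α < f i } ∈ D) ∧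
  ∀ g : I → Ordinal.{u}, (∀ i, g i < κ.ord) → { i | g i < f i } ∈ D →
    ∃ α < κ.ord, { i | g i < α } ∈ D

/-- The product of two ultrafilters:
`X ∈ D ×ᵤ D'` iff `{i | {i' | (i,i') ∈ X} ∈ D'} ∈ D`. -/
def uprod {I I' : Type u} (D : Ultrafilter I) (D' : Ultrafilter I') : Ultrafilter (I × I') :=
  D.bind fun i => D'.map fun i' => (i, i')

/-- The `D`-sum of the ultrafilters `Di`. -/
def usum {I : Type u} {J : I → Type u} (D : Ultrafilter I) (Di : ∀ i, Ultrafilter (J i)) :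
    Ultrafilter (Σ i, J i) :=
  D.bind fun i => (Di i).map fun j => ⟨i, j⟩

/-- `D` is `κ`-complete: intersections of fewer than `κ` members of `D` are in `D`. -/
def IsComplete {I : Type u} (D : Ultrafilter I) (κ : Cardinal.{u}) : Prop :=
  ∀ S : Set (Set I), #S < κ → (∀ s ∈ S, s ∈ D) → ⋂₀ S ∈ D

/-- `COV(λ, λ', μ)`: the least cardinality of a family of subsets of `λ`, each of
cardinality `< λ'`, such that every subset of `λ` of cardinality `< μ` is contained
in a member of the family. -/
noncomputable def cov (lam lam' μ : Cardinal.{u}) : Cardinal.{u} :=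
  sInf { c | ∃ H : Set (Set lam.out), #H = c ∧ (∀ x ∈ H, #x < lam') ∧
      ∀ s : Set lam.out, #s < μ → ∃ x ∈ H, s ⊆ x }

/-- Iterated beth: `bethIter 0 lam = lam`, `bethIter (m+1) lam = 2 ^ bethIter m lam`. -/
def bethIter (m : ℕ) (lam : Cardinal.{u}) : Cardinal.{u} :=
  (fun c => (2 : Cardinal.{u}) ^ c)^[m] lam


/-- Proposition 4.1: `|∏_D ν^κ| ≤ |∏_D ν^{<κ}| ^ cf(∏_D ⟨κ, <⟩)`. -/
theorem stmt4 {I : Type u} (D : Ultrafilter I) (κ ν : Cardinal.{u})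
    (hκ : ℵ₀ ≤ κ) (hν : ℵ₀ ≤ ν) :
    ultraPowCard D (ν ^ κ) ≤ ultraPowCard D (ν ^< κ) ^ germOrderCof D κ := by
  classical
  set K := κ.ord.ToType with hK
  haveI : Nonempty K := Ordinal.toType_nonempty_iff_ne_zero.2
    (by rw [Ne, Cardinal.ord_eq_zero]; exact fun h => (aleph0_pos.trans_le hκ).ne' h)
  -- basic cardinal facts
  have h2ν : (2 : Cardinal.{u}) ≤ ν := by exact_mod_cast (nat_lt_aleph0 2).le.trans hν
  have hν_le : ν ≤ ν ^< κ := by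
    have := le_powerlt (b := κ) ν (lt_of_lt_of_le one_lt_aleph0 hκ)
    rwa [power_one] at this
  have hinf : ℵ₀ ≤ ν ^< κ := hν.trans hν_le
  have hκν : κ ≤ ν ^< κ := by
    by_contra h
    push_neg at h
    have h1 : ν ^ (ν ^< κ) ≤ ν ^< κ := le_powerlt ν h
    have h2 : ν ^< κ < ν ^ (ν ^< κ) :=
      (cantor _).trans_le (power_le_power_right h2ν)
    exact absurd (h2.trans_le h1) (lt_irrefl _)
  -- size of initial segments of K
  have hIic : ∀ x : K, #(Set.Iic x) < κ := by
    intro x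
    letI : IsWellOrder K (· < ·) := isWellOrder_lt
    have htype : Cardinal.ord #K = Ordinal.type ((· < ·) : K → K → Prop) := by
      rw [mk_ord_toType, Ordinal.type_toType]
    have hIio : #(Set.Iio x) < κ := by
      have h1 := Cardinal.card_typein_lt (r := ((· < ·) : K → K → Prop)) x htype
      rw [Ordinal.card_typein, mk_ord_toType] at h1
      exact h1
    have : #(Set.Iic x) ≤ #(Set.Iio x) + 1 := by
      rw [← Set.Iio_insert]; exact mk_insert_le
    exact this.trans_lt (add_lt_of_lt hκ hIio (one_lt_aleph0.trans_le hκ))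
  -- the coding type
  set T := (Σ x : K, (Set.Iic x → ν.out)) with hT
  have hTcard : #T ≤ ν ^< κ := by
    rw [hT, mk_sigma]
    have h1 : (Cardinal.sum fun x : K => #(Set.Iic x → ν.out)) ≤
        Cardinal.sum fun _ : K => ν ^< κ := by
      refine sum_le_sum _ _ fun x => ?_
      have : #(Set.Iic x → ν.out) = ν ^ #(Set.Iic x) := by
        rw [← power_def, mk_out]
      rw [this]
      exact le_powerlt ν (hIic x)
    refine h1.trans ?_
    rw [sum_const', mk_ord_toType]
    rw [mul_eq_max hκ hinf, max_eq_right hκν]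
  obtain ⟨j⟩ : Nonempty (T ↪ (ν ^< κ).out) := by
    rw [← Cardinal.le_def, mk_out]; exact hTcard
  -- the equivalence for ν ^ κ
  obtain ⟨e⟩ : Nonempty ((ν ^ κ).out ≃ (K → ν.out)) := by
    rw [← Cardinal.eq, mk_out, ← power_def, mk_out, mk_ord_toType]
  -- get a cofinal set realizing the cofinality
  have hcofmem : germOrderCof D κ ∈
      { c | ∃ S : Set ((D : Filter I).Germ K), #S = c ∧ ∀ x, ∃ y ∈ S, x ≤ y } := by
    apply csInf_mem
    exact ⟨#(Set.univ : Set ((D : Filter I).Germ K)), Set.univ, rfl,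
      fun x => ⟨x, trivial, le_rfl⟩⟩
  obtain ⟨S, hS, hcof⟩ := hcofmem
  -- the coding map
  set m : (ν ^ κ).out → K → (ν ^< κ).out :=
    fun a k => j ⟨k, fun γ => e a γ.1⟩ with hm
  set Φ : (D : Filter I).Germ (ν ^ κ).out → (S → (D : Filter I).Germ (ν ^< κ).out) :=
    fun x s => Filter.Germ.map₂ m x s.1 with hΦ
  have hΦinj : Function.Injective Φ := by
    intro x x' hxx'
    by_contra hne
    obtain ⟨f, rfl⟩ : ∃ f : I → (ν ^ κ).out, (↑f : (D : Filter I).Germ (ν ^ κ).out) = x :=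
      x.inductionOn fun f => ⟨f, rfl⟩
    obtain ⟨f', rfl⟩ : ∃ f' : I → (ν ^ κ).out, (↑f' : (D : Filter I).Germ (ν ^ κ).out) = x' :=
      x'.inductionOn fun f' => ⟨f', rfl⟩
    rw [Filter.Germ.coe_eq] at hne
    have hne' : ∀ᶠ i in (D : Filter I), f i ≠ f' i := (Ultrafilter.eventually_not (f := D)).2 hne
    set β : I → K := fun i =>
      if h : f i ≠ f' i then (Function.ne_iff.mp (e.injective.ne h)).choose
      else Classical.arbitrary K with hβdef
    have hβ : ∀ i, f i ≠ f' i → e (f i) (β i) ≠ e (f' i) (β i) := by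
      intro i h
      simp only [hβdef, dif_pos h]
      exact (Function.ne_iff.mp (e.injective.ne h)).choose_spec
    obtain ⟨s, hsS, hbs⟩ := hcof ↑β
    obtain ⟨g, rfl⟩ : ∃ g : I → K, (↑g : (D : Filter I).Germ K) = s :=
      s.inductionOn fun g => ⟨g, rfl⟩
    have hΦeq : Filter.Germ.map₂ m (↑f) (↑g : (D : Filter I).Germ K) =
        Filter.Germ.map₂ m (↑f') (↑g : (D : Filter I).Germ K) :=
      congrFun hxx' ⟨↑g, hsS⟩
    rw [Filter.Germ.map₂_coe, Filter.Germ.map₂_coe, Filter.Germ.coe_eq] at hΦeq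
    have hle : ∀ᶠ i in (D : Filter I), β i ≤ g i := Filter.Germ.coe_le.1 hbs
    obtain ⟨i, h1, h2, h3⟩ := (hΦeq.and (hle.and hne')).exists
    have h4 := j.injective h1
    have h5 := eq_of_heq (Sigma.mk.inj_iff.mp h4).2
    have h6 := congrFun h5 ⟨β i, h2⟩
    exact hβ i h3 h6
  -- conclude
  have hle := mk_le_of_injective hΦinj
  rw [← power_def, hS] at hle
  exact hle

end Paper
end

section
/- Let λ be a limit cardinal and D an ultrafilter such that for every cardinal ν' < λ there is a cardinal ν with ν' < ν < λ for which D is ν-decomposable. Then D is κ-decomposable for some cardinal κ with λ ≤ κ ≤ λ^{cf λ}. -/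
universe u

open Cardinal

namespace Paper

/-- Theorem 5.1(a): if `λ` is a limit cardinal and there are arbitrarily large `ν < λ`
for which `D` is `ν`-decomposable, then `D` is `κ`-decomposable for some
`λ ≤ κ ≤ λ^(cf λ)`. -/
theorem stmt8 {I : Type u} (D : Ultrafilter I) (lam : Cardinal.{u})
    (hlam : ℵ₀ ≤ lam) (hlim : ∀ c < lam, Order.succ c < lam)
    (hdec : ∀ ν' < lam, ∃ ν, ν' < ν ∧ ν < lam ∧ IsDecomposable D ν) :
    ∃ κ, lam ≤ κ ∧ κ ≤ lam ^ lam.ord.cof ∧ IsDecomposable D κ := by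
  obtain ⟨ι, s, hlsub, hcard⟩ := Ordinal.exists_lsub_cof lam.ord
  have hchoice : ∀ β : ι, ∃ ν, (s β).card < ν ∧ ν < lam ∧ IsDecomposable D ν := by
    intro β
    apply hdec
    have hs : s β < lam.ord := hlsub ▸ Ordinal.lt_lsub s β
    exact Cardinal.lt_ord.mp hs
  choose ν hν1 hν2 hν3 using hchoice
  choose f hf using hν3
  set P := ∀ β : ι, (ν β).out with hP
  set g : I → P := fun i β => f β i with hg
  set S : Set Cardinal.{u} := {c | ∃ X : Set P, g ⁻¹' X ∈ D ∧ #X = c} with hS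
  have hSne : S.Nonempty := ⟨#(Set.univ : Set P), Set.univ, by rw [Set.preimage_univ]; exact Filter.univ_mem, rfl⟩
  set κ := sInf S with hκ
  -- every member of S is ≥ lam
  have hkey : ∀ X : Set P, g ⁻¹' X ∈ D → lam ≤ #X := by
    intro X hX
    by_contra hlt
    push_neg at hlt
    have h1 : (#X).ord < lam.ord := Cardinal.ord_lt_ord.mpr hlt
    rw [← hlsub, Ordinal.lt_lsub_iff] at h1
    obtain ⟨β, hβ⟩ := h1
    have h2 : #X < ν β := lt_of_le_of_lt (by
      have := Ordinal.card_le_card hβ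
      rwa [Cardinal.card_ord] at this) (hν1 β)
    have h3 : #((fun p : P => p β) '' X) < ν β := lt_of_le_of_lt Cardinal.mk_image_le h2
    refine hf β _ h3 ?_
    refine D.toFilter.mem_of_superset hX ?_
    intro i hi
    exact ⟨g i, hi, rfl⟩
  have hlamκ : lam ≤ κ := le_csInf hSne (by rintro c ⟨X, hX, rfl⟩; exact hkey X hX)
  have hκub : κ ≤ lam ^ lam.ord.cof := by
    have h1 : κ ≤ #(Set.univ : Set P) := csInf_le' ⟨Set.univ, by rw [Set.preimage_univ]; exact Filter.univ_mem, rfl⟩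
    have h2 : #P = Cardinal.prod ν := by
      rw [hP, Cardinal.mk_pi]; simp
    have h3 : Cardinal.prod ν ≤ Cardinal.prod (fun _ : ι => lam) :=
      Cardinal.prod_le_prod _ _ fun β => (hν2 β).le
    rw [Cardinal.prod_const' ι lam, hcard] at h3
    calc κ ≤ #(Set.univ : Set P) := h1
      _ = #P := Cardinal.mk_univ
      _ = Cardinal.prod ν := h2
      _ ≤ lam ^ lam.ord.cof := h3
  obtain ⟨X₀, hX₀D, hX₀card⟩ : κ ∈ S := csInf_mem hSne
  have hX₀ne : X₀.Nonempty := by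
    rw [← Set.nonempty_coe_sort, ← Cardinal.mk_ne_zero_iff, hX₀card]
    exact ne_of_gt (lt_of_lt_of_le (lt_of_lt_of_le aleph0_pos hlam) hlamκ)
  have hequiv : Nonempty (X₀ ≃ κ.out) := by
    rw [← Cardinal.eq, hX₀card, Cardinal.mk_out]
  obtain ⟨e⟩ := hequiv
  obtain ⟨x₀, hx₀⟩ := hX₀ne
  classical
  refine ⟨κ, hlamκ, hκub, ?_⟩
  refine ⟨fun i => if h : g i ∈ X₀ then e ⟨g i, h⟩ else e ⟨x₀, hx₀⟩, ?_⟩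
  intro Y hY hmem
  set Y' : Set P := {p | ∃ h : p ∈ X₀, e ⟨p, h⟩ ∈ Y} with hY'
  have hY'le : #Y' ≤ #Y := by
    refine Cardinal.mk_le_of_injective (f := fun q : Y' => (⟨e ⟨q.1, q.2.choose⟩, q.2.choose_spec⟩ : Y)) ?_
    rintro ⟨p, hp⟩ ⟨p', hp'⟩ h
    simp only [Subtype.mk.injEq] at h
    have h2 : (⟨p, hp.choose⟩ : X₀) = ⟨p', hp'.choose⟩ := e.injective h
    have h3 : p = p' := congrArg Subtype.val h2
    exact Subtype.ext h3
  have hgY' : g ⁻¹' Y' ∈ D := by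
    refine D.toFilter.mem_of_superset (Filter.inter_mem hmem hX₀D) ?_
    rintro i ⟨hi1, hi2⟩
    have hi2' : g i ∈ X₀ := hi2
    refine ⟨hi2', ?_⟩
    have : (if h : g i ∈ X₀ then e ⟨g i, h⟩ else e ⟨x₀, hx₀⟩) ∈ Y := hi1
    rwa [dif_pos hi2'] at this
  have hκY' : κ ≤ #Y' := csInf_le' ⟨Y', hgY', rfl⟩
  exact absurd (lt_of_le_of_lt hκY' (lt_of_le_of_lt hY'le hY)) (lt_irrefl κ)


end Paper
end

section
/- Let λ be a singular cardinal and D an ultrafilter such that for every cardinal ν' < λ there is a cardinal ν with ν' < ν < λ for which D is ν-decomposable, and suppose in addition that D is (μ, cf λ)-regular (μ an infinite cardinal). Then for every cardinal λ' with μ ≤ λ' < λ there exists a cardinal κ with λ ≤ κ ≤ COV(λ, λ', μ) such that D is κ-decomposable; in particular, D is κ-decomposable for some κ with λ ≤ κ ≤ λ^{<μ}. -/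
universe u

open Cardinal

namespace Paper

lemma coreLemma {I A : Type u} (D : Ultrafilter I) (lam : Cardinal.{u}) (hlam : ℵ₀ ≤ lam)
    (h : I → A) (hY : ∀ Y : Set A, #Y < lam → h ⁻¹' Y ∉ D) :
    ∃ κ, lam ≤ κ ∧ κ ≤ #A ∧ IsDecomposable D κ := by
  set T : Set Cardinal.{u} := {c | ∃ Y : Set A, #Y = c ∧ h ⁻¹' Y ∈ D} with hT
  have hneT : T.Nonempty := ⟨#(Set.univ : Set A), Set.univ, rfl, Filter.univ_mem⟩
  set κ := sInf T with hκ
  obtain ⟨Y, hYk, hYD⟩ : κ ∈ T := csInf_mem hneT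
  have hlamκ : lam ≤ κ := by
    by_contra hc
    exact hY Y (hYk.symm ▸ lt_of_not_ge hc) hYD
  have hκA : κ ≤ #A := by
    refine le_trans (csInf_le' ?_) (le_of_eq (mk_univ (α := A)))
    exact ⟨Set.univ, rfl, Filter.univ_mem⟩
  have hmin : ∀ Z : Set A, #Z < κ → h ⁻¹' Z ∉ D := by
    intro Z hZ hZD
    exact absurd (csInf_le' (show #Z ∈ T from ⟨Z, rfl, hZD⟩)) (not_le_of_gt hZ)
  -- equiv
  have hYne : Y.Nonempty := by
    rw [← Set.nonempty_coe_sort, ← mk_ne_zero_iff, hYk]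
    exact ne_of_gt (lt_of_lt_of_le (lt_of_lt_of_le aleph0_pos hlam) hlamκ)
  obtain ⟨y0, hy0⟩ := hYne
  have : #Y = #κ.out := by rw [hYk, mk_out]
  obtain ⟨e⟩ := Cardinal.eq.mp this
  refine ⟨κ, hlamκ, hκA, ?_⟩
  classical
  refine ⟨fun i => if hm : h i ∈ Y then e ⟨h i, hm⟩ else e ⟨y0, hy0⟩, ?_⟩
  intro X hX hXD
  set Z : Set A := Subtype.val '' (⇑e ⁻¹' X) with hZ
  have hZcard : #Z < κ := by
    calc #Z = #(⇑e ⁻¹' X) := mk_image_eq Subtype.val_injective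
    _ = #X := mk_preimage_of_injective_of_subset_range _ _ e.injective (by rw [Equiv.range_eq_univ]; exact Set.subset_univ X)
    _ < κ := hX
  have hsub : (fun i => if hm : h i ∈ Y then e ⟨h i, hm⟩ else e ⟨y0, hy0⟩) ⁻¹' X ⊆
      h ⁻¹' Z ∪ (h ⁻¹' Y)ᶜ := by
    intro i hi
    by_cases hm : h i ∈ Y
    · left
      simp only [Set.mem_preimage, dif_pos hm] at hi
      exact ⟨⟨h i, hm⟩, hi, rfl⟩
    · right; exact hm
  have : h ⁻¹' Z ∪ (h ⁻¹' Y)ᶜ ∈ D := Filter.mem_of_superset hXD hsub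
  rcases (Ultrafilter.union_mem_iff).mp this with h1 | h1
  · exact hmin Z hZcard h1
  · exact (Ultrafilter.compl_notMem_iff.mpr hYD) h1

lemma muLePowerlt (lam mu : Cardinal.{u}) (hlam : ℵ₀ ≤ lam) : mu ≤ lam ^< mu := by
  by_contra hc
  push_neg at hc
  have h2 : (2 : Cardinal.{u}) ≤ lam := (nat_lt_aleph0 2).le.trans hlam
  have := calc lam ^< mu < 2 ^ (lam ^< mu) := Cardinal.cantor _
    _ ≤ lam ^ (lam ^< mu) := Cardinal.power_le_power_right h2
    _ ≤ lam ^< mu := Cardinal.le_powerlt lam hc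
  exact absurd this (lt_irrefl _)

lemma countLemma (lam mu cc : Cardinal.{u}) (hlam : ℵ₀ ≤ lam) (hmu : ℵ₀ ≤ mu) :
    #{s : Set lam.out // #s ≤ cc ∧ #s < mu} ≤ lam ^< mu := by
  have hlamle : lam ≤ lam ^< mu := by
    have := Cardinal.le_powerlt (b := mu) lam (lt_of_lt_of_le one_lt_aleph0 hmu)
    rwa [power_one] at this
  have hbdd : ∀ ν : Cardinal.{u}, ν < mu → #{s : Set lam.out // #s ≤ ν} ≤ lam ^< mu := by
    intro ν hν
    calc #{s : Set lam.out // #s ≤ ν}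
        ≤ #{s : Set lam.out // s ⊆ Set.univ ∧ #s ≤ ν} :=
          mk_subtype_mono (fun s hs => ⟨Set.subset_univ s, hs⟩)
      _ ≤ max #(Set.univ : Set lam.out) ℵ₀ ^ ν := mk_bounded_subset_le _ ν
      _ = lam ^ ν := by rw [mk_univ, mk_out, max_eq_left hlam]
      _ ≤ lam ^< mu := Cardinal.le_powerlt lam hν
  rcases lt_or_ge cc mu with hcm | hmc
  · exact le_trans (mk_subtype_mono (fun s hs => hs.1)) (hbdd cc hcm)
  · -- every s in the subtype has #s < mu
    have hsub : {s : Set lam.out | #s ≤ cc ∧ #s < mu} ⊆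
        ⋃ (o : mu.ord.ToType), {s : Set lam.out | #s ≤ (@Ordinal.typein mu.ord.ToType (· < ·) isWellOrder_lt o).card} := by
      rintro s ⟨-, hs⟩
      have h1 : (#s).ord < @Ordinal.type mu.ord.ToType (· < ·) isWellOrder_lt := by
        rw [Ordinal.type_toType]; exact Cardinal.ord_lt_ord.mpr hs
      refine Set.mem_iUnion.mpr ⟨@Ordinal.enum mu.ord.ToType (· < ·) isWellOrder_lt ⟨(#s).ord, h1⟩, ?_⟩
      simp only [Set.mem_setOf_eq, Ordinal.typein_enum, Cardinal.card_ord, le_refl]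
    calc #{s : Set lam.out // #s ≤ cc ∧ #s < mu}
        ≤ #(⋃ (o : mu.ord.ToType), {s : Set lam.out | #s ≤ (@Ordinal.typein mu.ord.ToType (· < ·) isWellOrder_lt o).card}) :=
          mk_le_mk_of_subset hsub
      _ ≤ #(mu.ord.ToType) * ⨆ (o : mu.ord.ToType), #{s : Set lam.out | #s ≤ (@Ordinal.typein mu.ord.ToType (· < ·) isWellOrder_lt o).card} :=
          mk_iUnion_le _
      _ ≤ mu * (lam ^< mu) := by
          refine mul_le_mul' (by rw [Cardinal.mk_toType, Cardinal.card_ord]) ?_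
          have : Nonempty mu.ord.ToType := by
            rw [Ordinal.nonempty_toType_iff]
            simp only [ne_eq, Cardinal.ord_eq_zero]
            intro h
            rw [h] at hmu
            exact absurd (lt_of_lt_of_le aleph0_pos hmu) (lt_irrefl 0)
          refine ciSup_le' (fun o => hbdd _ (Cardinal.card_typein_toType_lt mu o))
      _ ≤ (lam ^< mu) * (lam ^< mu) := mul_le_mul' (muLePowerlt lam mu hlam) le_rfl
      _ = lam ^< mu := mul_eq_self (le_trans hlam hlamle)

/-- Theorem 5.1(b): if `λ` is singular, there are arbitrarily large `ν < λ` for which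
`D` is `ν`-decomposable, and `D` is `(μ, cf λ)`-regular, then for every
`μ ≤ λ' < λ` there is `κ` with `λ ≤ κ ≤ COV(λ, λ', μ)` such that `D` is
`κ`-decomposable; in particular `D` is `κ`-decomposable for some `λ ≤ κ ≤ λ^{<μ}`. -/
theorem stmt9 {I : Type u} (D : Ultrafilter I) (lam mu : Cardinal.{u})
    (hmu : ℵ₀ ≤ mu) (hlam : ℵ₀ ≤ lam) (hsing : lam.ord.cof < lam)
    (hdec : ∀ ν' < lam, ∃ ν, ν' < ν ∧ ν < lam ∧ IsDecomposable D ν)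
    (hreg : IsRegularUF D mu lam.ord.cof) :
    (∀ lam', mu ≤ lam' → lam' < lam →
        ∃ κ, lam ≤ κ ∧ κ ≤ cov lam lam' mu ∧ IsDecomposable D κ) ∧
      ∃ κ, lam ≤ κ ∧ κ ≤ lam ^< mu ∧ IsDecomposable D κ := by
  classical
  obtain ⟨X, hXD, hXint⟩ := hreg
  -- a cofinal family indexed by (lam.ord.cof).out
  obtain ⟨S, hSunb, hScard⟩ := Order.exists_cof_eq lam.ord.ToType
  rw [← Ordinal.cof_type, Ordinal.type_toType] at hScard
  have hec : #((lam.ord.cof).out) = #S := by rw [mk_out, ← hScard]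
  obtain ⟨e⟩ := Cardinal.eq.mp hec
  set θ : (lam.ord.cof).out → Cardinal.{u} :=
    fun β => (@Ordinal.typein lam.ord.ToType (· < ·) isWellOrder_lt (e β).1).card with hθdef
  have hθ : ∀ β, θ β < lam := fun β => Cardinal.card_typein_toType_lt lam (e β).1
  have hcof : ∀ w < lam, ∃ β, w ≤ θ β := by
    intro w hw
    have h1 : w.ord < @Ordinal.type lam.ord.ToType (· < ·) isWellOrder_lt := by
      rw [Ordinal.type_toType]; exact Cardinal.ord_lt_ord.mpr hw
    obtain ⟨b, hbS, hba⟩ := hSunb (@Ordinal.enum lam.ord.ToType (· < ·) isWellOrder_lt ⟨w.ord, h1⟩)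
    refine ⟨e.symm ⟨b, hbS⟩, ?_⟩
    have h2 : w.ord ≤ @Ordinal.typein lam.ord.ToType (· < ·) isWellOrder_lt b := by
      have := (@Ordinal.typein_le_typein lam.ord.ToType (· < ·) isWellOrder_lt
        (@Ordinal.enum lam.ord.ToType (· < ·) isWellOrder_lt ⟨w.ord, h1⟩) b).mpr (not_lt_of_ge hba)
      rwa [Ordinal.typein_enum] at this
    have h3 : w ≤ (@Ordinal.typein lam.ord.ToType (· < ·) isWellOrder_lt b).card := by
      have := Ordinal.card_le_card h2
      rwa [Cardinal.card_ord] at this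
    simpa [hθdef, Equiv.apply_symm_apply] using h3
  choose ν hν1 hν2 hν3 using fun β => hdec (θ β) (hθ β)
  choose f' hf' using hν3
  have hemb : ∀ β, Nonempty ((ν β).out ↪ lam.out) := by
    intro β
    rw [← Cardinal.le_def, mk_out, mk_out]
    exact (hν2 β).le
  set emb : ∀ β, (ν β).out ↪ lam.out := fun β => (hemb β).some with hembdef
  set g : I → Set lam.out := fun i => (fun β => emb β (f' β i)) '' {β | i ∈ X β} with hgdef
  have hT : ∀ i, #{β | i ∈ X β} < mu := by
    intro i
    by_contra hc
    push_neg at hc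
    obtain ⟨B, hBsub, hBcard⟩ := le_mk_iff_exists_subset.mp hc
    have : i ∈ ⋂ β ∈ B, X β := Set.mem_biInter (fun β hβ => hBsub hβ)
    rw [hXint B hBcard] at this
    exact this
  have hgmu : ∀ i, #(g i) < mu := fun i => lt_of_le_of_lt mk_image_le (hT i)
  have hgc : ∀ i, #(g i) ≤ lam.ord.cof := by
    intro i
    refine le_trans mk_image_le (le_trans (mk_set_le _) ?_)
    rw [mk_out]
  -- the gluing lemma
  have key : ∀ (A : Type u) (F : A → Set lam.out) (bnd : Cardinal.{u}), bnd < lam →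
      (∀ a, #(F a) ≤ bnd) → ∀ h : I → A, (∀ i, g i ⊆ F (h i)) →
      ∀ Y : Set A, #Y < lam → h ⁻¹' Y ∉ D := by
    intro A F bnd hbnd hF h hgF Y hYlam hYD
    rcases Y.eq_empty_or_nonempty with rfl | hYne
    · simp only [Set.preimage_empty] at hYD
      exact (Filter.empty_notMem _) hYD
    · have : Nonempty Y := hYne.to_subtype
      set W : Set lam.out := ⋃ (a : Y), F a.1 with hWdef
      have hW : #W < lam := by
        refine lt_of_le_of_lt (mk_iUnion_le _) ?_
        exact mul_lt_of_lt hlam hYlam (lt_of_le_of_lt (ciSup_le' (fun a => hF a.1)) hbnd)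
      obtain ⟨β, hβ⟩ := hcof #W hW
      have hZ : (f' β) ⁻¹' ((emb β) ⁻¹' W) ∉ D := by
        refine hf' β _ (lt_of_le_of_lt ?_ (hν1 β))
        exact le_trans (mk_preimage_of_injective _ _ (emb β).injective) hβ
      have hsub : h ⁻¹' Y ∩ X β ⊆ (f' β) ⁻¹' ((emb β) ⁻¹' W) := by
        rintro i ⟨hiY, hiX⟩
        have h2 : emb β (f' β i) ∈ g i := ⟨β, hiX, rfl⟩
        have h3 : emb β (f' β i) ∈ F (h i) := hgF i h2
        exact Set.mem_iUnion.mpr ⟨⟨h i, hiY⟩, h3⟩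
      exact hZ (Filter.mem_of_superset (Filter.inter_mem hYD (hXD β)) hsub)
  constructor
  · intro lam' hmul' hl'lam
    have hcovne : {c | ∃ H : Set (Set lam.out), #H = c ∧ (∀ x ∈ H, #x < lam') ∧
        ∀ s : Set lam.out, #s < mu → ∃ x ∈ H, s ⊆ x}.Nonempty := by
      refine ⟨_, {s : Set lam.out | #s < mu}, rfl, ?_, ?_⟩
      · exact fun x hx => lt_of_lt_of_le hx hmul'
      · exact fun s hs => ⟨s, hs, subset_rfl⟩
    obtain ⟨H, hHmk, hHsize, hHcov⟩ :
        ∃ H : Set (Set lam.out), #H = cov lam lam' mu ∧ (∀ x ∈ H, #x < lam') ∧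
          ∀ s : Set lam.out, #s < mu → ∃ x ∈ H, s ⊆ x := csInf_mem hcovne
    choose hh hh1 hh2 using fun i => hHcov (g i) (hgmu i)
    obtain ⟨κ, h1, h2, h3⟩ := coreLemma D lam hlam (fun i => (⟨hh i, hh1 i⟩ : H))
      (key H (fun a => a.1) lam' hl'lam (fun a => (hHsize a.1 a.2).le) _ hh2)
    exact ⟨κ, h1, by rwa [hHmk] at h2, h3⟩
  · obtain ⟨κ, h1, h2, h3⟩ := coreLemma D lam hlam
      (fun i => (⟨g i, hgc i, hgmu i⟩ : {s : Set lam.out // #s ≤ lam.ord.cof ∧ #s < mu}))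
      (key _ (fun a => a.1) lam.ord.cof hsing (fun a => a.2.1) _ (fun i => subset_rfl))
    exact ⟨κ, h1, le_trans h2 (countLemma lam mu lam.ord.cof hlam hmu), h3⟩

end Paper
end

section
/- Let μ be a singular cardinal, λ < μ an infinite cardinal, and D an ultrafilter which is (λ, μ')-regular for all cardinals μ' < μ. If at least one of the following holds: (a) λ is regular; (b) D is (cf λ, cf μ)-regular; (c) the cofinality of ∏_D ⟨cf λ, <⟩ is different from cf μ; (d) cf λ ≠ cf μ and D is not (cf λ, cf λ)-regular; then D is (λ, μ)-regular. -/
universe u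

open Cardinal

namespace Paper

section Aux

noncomputable def tyin {o : Ordinal.{u}} (j : o.ToType) : Ordinal.{u} :=
  @Ordinal.typein o.ToType (· < ·) isWellOrder_lt j

lemma tyin_lt_self {o : Ordinal.{u}} (j : o.ToType) : tyin j < o :=
  Ordinal.typein_lt_self j

lemma tyin_surj {o o' : Ordinal.{u}} (h : o' < o) : ∃ j : o.ToType, tyin j = o' :=
  @Ordinal.typein_surj o.ToType (· < ·) isWellOrder_lt o'
    (by rw [Ordinal.type_toType]; exact h)

lemma tyin_le_tyin {o : Ordinal.{u}} {x y : o.ToType} (h : x ≤ y) : tyin x ≤ tyin y :=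
  (Ordinal.typein_le_typein' o).2 h

lemma card_tyin_lt (c : Cardinal.{u}) (x : c.ord.ToType) : (tyin x).card < c :=
  Cardinal.card_typein_toType_lt c x

variable {I : Type u} {D : Ultrafilter I}


/-- Function form of regularity over an arbitrary index type. -/
def RegFun (D : Ultrafilter I) (a : Cardinal.{u}) (β : Type u) : Prop :=
  ∃ f : I → Set β, (∀ i, #(f i) < a) ∧ ∀ x : β, {i | x ∈ f i} ∈ D

lemma isRegularUF_of_regFun {a b : Cardinal.{u}} (h : RegFun D a b.out) :
    IsRegularUF D a b := by
  obtain ⟨f, hsize, hcov⟩ := h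
  refine ⟨fun β => {i | β ∈ f i}, hcov, ?_⟩
  intro B hB
  rw [Set.eq_empty_iff_forall_notMem]
  intro i hi
  simp only [Set.mem_iInter, Set.mem_setOf_eq] at hi
  have hsub : B ⊆ f i := fun β hβ => hi β hβ
  have := Cardinal.mk_le_mk_of_subset hsub
  rw [hB] at this
  exact (this.trans_lt (hsize i)).false

lemma regFun_of_isRegularUF {a b : Cardinal.{u}} (h : IsRegularUF D a b) :
    RegFun D a b.out := by
  obtain ⟨X, hX, hint⟩ := h
  refine ⟨fun i => {β | i ∈ X β}, ?_, fun β => hX β⟩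
  intro i
  by_contra hc
  push_neg at hc
  obtain ⟨B, hBsub, hBcard⟩ := Cardinal.le_mk_iff_exists_subset.1 hc
  have h2 := hint B hBcard
  rw [Set.eq_empty_iff_forall_notMem] at h2
  exact h2 i (Set.mem_iInter₂.2 fun β hβ => hBsub hβ)

lemma RegFun.mono {a : Cardinal.{u}} {β γ : Type u} (h : RegFun D a β) (e : γ ↪ β) :
    RegFun D a γ := by
  obtain ⟨f, hsize, hcov⟩ := h
  exact ⟨fun i => e ⁻¹' f i, fun i =>
    (Cardinal.mk_preimage_of_injective e (f i) e.injective).trans_lt (hsize i),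
    fun x => hcov (e x)⟩

lemma RegFun.of_card_le {a : Cardinal.{u}} {β γ : Type u} (h : RegFun D a β)
    (hc : #γ ≤ #β) : RegFun D a γ :=
  h.mono ((Cardinal.le_def γ β).1 hc).some

lemma glue {lam mu : Cardinal.{u}} (hlam : ℵ₀ ≤ lam) {A : Type u} (mus : A → Cardinal.{u})
    (hcof : ∀ c < mu, ∃ α, c < mus α)
    (sel : I → Set A) (hselcov : ∀ α, {i | α ∈ sel i} ∈ D)
    (f : ∀ α, I → Set (mus α).out) (hfcov : ∀ α b, {i | b ∈ f α i} ∈ D)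
    (ν : I → Cardinal.{u}) (hν : ∀ i, ν i < lam) (hsel : ∀ i, #(sel i) < lam)
    (hsize : ∀ i, ∀ α ∈ sel i, #(f α i) ≤ ν i) :
    IsRegularUF D lam mu := by
  set T := (Σ α : A, (mus α).out) with hT
  have hreg : RegFun D lam T := by
    refine ⟨fun i => ⋃ α ∈ sel i, (Sigma.mk α '' f α i), fun i => ?_, fun p => ?_⟩
    · have hle : #(⋃ α ∈ sel i, (Sigma.mk α '' f α i : Set T)) ≤ #(sel i) * ν i := by
        refine (Cardinal.mk_biUnion_le _ (sel i)).trans ?_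
        exact mul_le_mul_right (ciSup_le' fun α =>
          (Cardinal.mk_image_le).trans (hsize i α.1 α.2)) _
      exact hle.trans_lt (Cardinal.mul_lt_of_lt hlam (hsel i) (hν i))
    · obtain ⟨α, b⟩ := p
      have : {i | α ∈ sel i} ∩ {i | b ∈ f α i} ⊆
          {i | (⟨α, b⟩ : T) ∈ ⋃ α ∈ sel i, (Sigma.mk α '' f α i : Set T)} := by
        rintro i ⟨h1, h2⟩
        exact Set.mem_biUnion h1 ⟨b, h2, rfl⟩
      exact Filter.mem_of_superset (Filter.inter_mem (hselcov α) (hfcov α b)) this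
  have hmu : mu ≤ #T := by
    rw [hT, Cardinal.mk_sigma]
    simp only [Cardinal.mk_out]
    by_contra hlt
    push_neg at hlt
    obtain ⟨α, hα⟩ := hcof _ hlt
    exact (hα.trans_le (Cardinal.le_sum mus α)).false
  refine isRegularUF_of_regFun (hreg.of_card_le ?_)
  rwa [Cardinal.mk_out]

/-- A cofinal (in cardinality) family below a singular `mu`, indexed by `(cf mu).out`. -/
lemma exists_mus {mu : Cardinal.{u}} (hmu : ℵ₀ < mu) (hsing : mu.ord.cof < mu) :
    ∃ mus : (mu.ord.cof).out → Cardinal.{u},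
      (∀ α, mus α < mu) ∧ ∀ c < mu, ∃ α, c < mus α := by
  obtain ⟨ι, fo, hlsub, hι⟩ := Ordinal.exists_lsub_cof mu.ord
  have hcard : #(mu.ord.cof).out = #ι := by rw [Cardinal.mk_out, hι]
  obtain ⟨e⟩ := Cardinal.eq.1 hcard
  refine ⟨fun α => (fo (e α)).card, fun α => ?_, fun c hc => ?_⟩
  · have := Ordinal.lt_lsub fo (e α)
    rw [hlsub] at this
    exact Cardinal.lt_ord.1 this
  · -- use c' = max c ℵ₀ and its successor
    set c' := max c ℵ₀ with hc'
    have hc'lt : c' < mu := max_lt hc hmu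
    have hsucc : Order.succ c' < mu := by
      rcases lt_or_eq_of_le (Order.succ_le_of_lt hc'lt) with h | h
      · exact h
      · exfalso
        have : mu.IsRegular := h ▸ Cardinal.isRegular_succ (le_max_right _ _)
        exact (this.2.trans_lt hsing).false
    have : ∃ x, fo x ≥ (Order.succ c').ord := by
      by_contra hall
      push_neg at hall
      have : Ordinal.lsub fo ≤ (Order.succ c').ord := Ordinal.lsub_le_iff.2 hall
      rw [hlsub] at this
      exact ((Cardinal.ord_lt_ord.2 hsucc).trans_le this).false
    obtain ⟨x, hx⟩ := this
    refine ⟨e.symm x, ?_⟩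
    have : Order.succ c' ≤ (fo (e (e.symm x))).card := by
      rw [Equiv.apply_symm_apply]
      calc Order.succ c' = ((Order.succ c').ord).card := (Cardinal.card_ord _).symm
        _ ≤ _ := Ordinal.card_le_card hx
    exact lt_of_lt_of_le (lt_of_le_of_lt (le_max_left c ℵ₀) (Order.lt_succ c')) this
lemma exists_Lambda {lam : Cardinal.{u}} (hlam : ℵ₀ ≤ lam) :
    ∃ Λ : lam.ord.cof.ord.ToType → Cardinal.{u},
      Monotone Λ ∧ (∀ j, Λ j < lam) ∧ ∀ c < lam, ∃ j, c ≤ Λ j := by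
  obtain ⟨ι, fo, hlsub, hι⟩ := Ordinal.exists_lsub_cof lam.ord
  have hcard : #(lam.ord.cof.ord.ToType) = #ι := by
    rw [Cardinal.mk_toType, Cardinal.card_ord, hι]
  obtain ⟨e⟩ := Cardinal.eq.1 hcard
  have hκ : ℵ₀ ≤ lam.ord.cof := Ordinal.aleph0_le_cof.2 (Cardinal.isSuccLimit_ord hlam)
  have hfo : ∀ x, (fo x).card < lam := by
    intro x
    have := Ordinal.lt_lsub fo x
    rw [hlsub] at this
    exact Cardinal.lt_ord.1 this
  have hIic : ∀ j : lam.ord.cof.ord.ToType, #(Set.Iic j) < lam.ord.cof := by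
    intro j
    have h2 : #(Set.Iio j) < lam.ord.cof := Cardinal.mk_Iio_ord_toType j
    have h3 : #(Set.Iic j) ≤ #(Set.Iio j) + 1 := by
      rw [← Set.Iio_insert]
      exact (Cardinal.mk_insert_le).trans le_rfl
    exact h3.trans_lt (Cardinal.add_lt_of_lt hκ h2 (lt_of_lt_of_le Cardinal.one_lt_aleph0 hκ))
  refine ⟨fun j => ⨆ j' : Set.Iic j, (fo (e j')).card, ?_, ?_, ?_⟩
  · intro j k hjk
    refine ciSup_le' fun j' => ?_
    exact le_ciSup (Cardinal.bddAbove_range _) (⟨j'.1, le_trans j'.2 hjk⟩ : Set.Iic k)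
  · intro j
    exact Ordinal.iSup_lt (hIic j) (fun j' => hfo (e j'.1))
  · intro c hc
    have : ∃ x, c.ord ≤ fo x := by
      by_contra hall
      push_neg at hall
      have h4 : Ordinal.lsub fo ≤ c.ord := Ordinal.lsub_le_iff.2 hall
      rw [hlsub] at h4
      exact ((Cardinal.ord_lt_ord.2 hc).trans_le h4).false
    obtain ⟨x, hx⟩ := this
    refine ⟨e.symm x, ?_⟩
    have h5 : c ≤ (fo (e (e.symm x))).card := by
      rw [Equiv.apply_symm_apply]
      calc c = c.ord.card := (Cardinal.card_ord c).symm
        _ ≤ _ := Ordinal.card_le_card hx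
    exact h5.trans (le_ciSup (Cardinal.bddAbove_range _)
      (⟨e.symm x, Set.self_mem_Iic⟩ : Set.Iic (e.symm x)))

lemma branchI {lam mu : Cardinal.{u}} (hlam : ℵ₀ ≤ lam) (hmu : ℵ₀ < mu)
    (hsing : mu.ord.cof < mu)
    (hreg : ∀ mu' < mu, IsRegularUF D lam mu')
    (hb : RegFun D lam.ord.cof (mu.ord.cof).out) : IsRegularUF D lam mu := by
  obtain ⟨mus, hmuslt, hmuscof⟩ := exists_mus hmu hsing
  choose f hfsize hfcov using fun α => regFun_of_isRegularUF (hreg (mus α) (hmuslt α))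
  obtain ⟨g, hgsize, hgcov⟩ := hb
  refine glue hlam mus hmuscof g hgcov f hfcov
    (fun i => ⨆ α : g i, #(f α.1 i)) (fun i => ?_) (fun i => ?_) (fun i α hα => ?_)
  · exact Ordinal.iSup_lt (hgsize i) (fun α => hfsize α.1 i)
  · exact (hgsize i).trans_le (Ordinal.cof_ord_le lam)
  · exact le_ciSup (Cardinal.bddAbove_range _) (⟨α, hα⟩ : g i)

lemma bdd_of_card_lt_germCof {κ : Cardinal.{u}}
    (S : Set ((D : Filter I).Germ κ.ord.ToType))
    (hS : #S < germOrderCof D κ) :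
    ∃ H : I → κ.ord.ToType, ∀ s ∈ S, s ≤ (↑H : (D : Filter I).Germ κ.ord.ToType) := by
  by_contra hc
  push_neg at hc
  have hcof : ∀ x : (D : Filter I).Germ κ.ord.ToType, ∃ y ∈ S, x ≤ y := by
    intro x
    refine x.inductionOn fun H => ?_
    obtain ⟨s, hsS, hs⟩ := hc H
    exact ⟨s, hsS, hs.le⟩
  exact hS.not_ge (csInf_le' ⟨S, rfl, hcof⟩)

lemma germCof_achieved (D : Ultrafilter I) (κ : Cardinal.{u}) :
    ∃ S : Set ((D : Filter I).Germ κ.ord.ToType),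
      #S = germOrderCof D κ ∧ ∀ x, ∃ y ∈ S, x ≤ y := by
  have hne : { c | ∃ S : Set ((D : Filter I).Germ κ.ord.ToType),
      #S = c ∧ ∀ x, ∃ y ∈ S, x ≤ y }.Nonempty :=
    ⟨#(Set.univ : Set ((D : Filter I).Germ κ.ord.ToType)),
      Set.univ, rfl, fun x => ⟨x, trivial, le_rfl⟩⟩
  obtain ⟨S, hS, hcof⟩ := csInf_mem hne
  exact ⟨S, hS, hcof⟩
/-- If `D` is not `(κ, κ)`-regular (κ = cf λ), constants are cofinal in the
germ order. -/
lemma constants_cofinal {lam : Cardinal.{u}} (hlam : ℵ₀ ≤ lam)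
    (hnr : ¬ IsRegularUF D lam.ord.cof lam.ord.cof)
    (x : (D : Filter I).Germ lam.ord.cof.ord.ToType) :
    ∃ j : lam.ord.cof.ord.ToType,
      x ≤ (↑(fun _ => j : I → lam.ord.cof.ord.ToType) :
        (D : Filter I).Germ lam.ord.cof.ord.ToType) := by
  by_contra hc
  push_neg at hc
  apply hnr
  obtain ⟨h, rfl⟩ : ∃ h : I → lam.ord.cof.ord.ToType,
      (↑h : (D : Filter I).Germ lam.ord.cof.ord.ToType) = x :=
    x.inductionOn fun h => ⟨h, rfl⟩
  have hbig : ∀ j : lam.ord.cof.ord.ToType, {i | j < h i} ∈ D := by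
    intro j
    have h1 := (hc j).2
    rw [Filter.Germ.coe_le] at h1
    have h2 : {i | h i ≤ j} ∉ D := h1
    have h3 := Ultrafilter.compl_mem_iff_notMem.2 h2
    have h4 : {i | h i ≤ j}ᶜ = {i | j < h i} := by
      ext i; simp [not_le]
    rwa [h4] at h3
  have hrf : RegFun D lam.ord.cof lam.ord.cof.ord.ToType := by
    refine ⟨fun i => Set.Iio (h i), fun i => Cardinal.mk_Iio_ord_toType (h i),
      fun j => hbig j⟩
  refine isRegularUF_of_regFun (hrf.of_card_le ?_)
  rw [Cardinal.mk_out, Cardinal.mk_toType, Cardinal.card_ord]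

lemma caseD {lam : Cardinal.{u}} (hlam : ℵ₀ ≤ lam)
    (hnr : ¬ IsRegularUF D lam.ord.cof lam.ord.cof) :
    germOrderCof D lam.ord.cof = lam.ord.cof := by
  have hκ : ℵ₀ ≤ lam.ord.cof := Ordinal.aleph0_le_cof.2 (Cardinal.isSuccLimit_ord hlam)
  have hκreg : (lam.ord.cof).IsRegular := Cardinal.isRegular_cof (Cardinal.isSuccLimit_ord hlam)
  refine le_antisymm ?_ ?_
  · -- constants form a cofinal set of size ≤ κ
    have hmem : #(Set.range (fun j : lam.ord.cof.ord.ToType =>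
        (↑(fun _ => j : I → lam.ord.cof.ord.ToType) :
          (D : Filter I).Germ lam.ord.cof.ord.ToType))) ∈
        { c | ∃ S : Set ((D : Filter I).Germ lam.ord.cof.ord.ToType),
          #S = c ∧ ∀ x, ∃ y ∈ S, x ≤ y } := by
      refine ⟨_, rfl, fun x => ?_⟩
      obtain ⟨j, hj⟩ := constants_cofinal hlam hnr x
      exact ⟨_, ⟨j, rfl⟩, hj⟩
    refine (csInf_le' hmem).trans ?_
    refine (Cardinal.mk_range_le).trans ?_
    rw [Cardinal.mk_toType, Cardinal.card_ord]
  · -- otherwise a small cofinal set gives a small cofinal subset of κ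
    by_contra hlt
    push_neg at hlt
    obtain ⟨S, hScard, hScof⟩ := germCof_achieved D lam.ord.cof
    -- pick constant bounds
    have hj : ∀ s : S, ∃ j : lam.ord.cof.ord.ToType,
        (s : (D : Filter I).Germ lam.ord.cof.ord.ToType) ≤
          (↑(fun _ => j : I → lam.ord.cof.ord.ToType) : (D : Filter I).Germ lam.ord.cof.ord.ToType) :=
      fun s => constants_cofinal hlam hnr s
    choose js hjs using hj
    set fΩ : S → Ordinal.{u} := fun s => tyin (js s) with hfΩ
    have hle : Ordinal.lsub fΩ ≤ lam.ord.cof.ord := by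
      refine Ordinal.lsub_le_iff.2 fun s => ?_
      exact tyin_lt_self (js s)
    have hge : lam.ord.cof.ord ≤ Ordinal.lsub fΩ := by
      by_contra hh
      push_neg at hh
      -- lsub fΩ < κ.ord, so some a : Ω with typein a = lsub fΩ... use typein_surj
      obtain ⟨a, ha⟩ := tyin_surj hh
      -- get s ∈ S above the constant a
      obtain ⟨y, hyS, hy⟩ := hScof
        (↑(fun _ => a : I → lam.ord.cof.ord.ToType) : (D : Filter I).Germ lam.ord.cof.ord.ToType)
      have hconst : a ≤ js ⟨y, hyS⟩ := by
        have h5 := hy.trans (hjs ⟨y, hyS⟩)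
        rw [Filter.Germ.coe_le] at h5
        obtain ⟨i, hi⟩ := h5.exists
        exact hi
      have h6 : fΩ ⟨y, hyS⟩ < Ordinal.lsub fΩ := Ordinal.lt_lsub fΩ _
      have h7 : Ordinal.lsub fΩ ≤ fΩ ⟨y, hyS⟩ := by
        rw [← ha]
        exact tyin_le_tyin hconst
      exact (h6.trans_le h7).false
    have heq : Ordinal.lsub fΩ = lam.ord.cof.ord := le_antisymm hle hge
    have h8 := Ordinal.cof_lsub_le fΩ
    rw [heq, hκreg.cof_eq, hScard] at h8
    exact hlt.not_ge h8
lemma branchII {lam mu : Cardinal.{u}} (hlam : ℵ₀ ≤ lam) (hmu : ℵ₀ < mu)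
    (hsing : mu.ord.cof < mu) (hlt : lam < mu)
    (hreg : ∀ mu' < mu, IsRegularUF D lam mu')
    (hne : germOrderCof D lam.ord.cof ≠ mu.ord.cof) : IsRegularUF D lam mu := by
  obtain ⟨mus, hmuslt, hmuscof⟩ := exists_mus hmu hsing
  choose f hfsize hfcov using fun α => regFun_of_isRegularUF (hreg (mus α) (hmuslt α))
  obtain ⟨g, hgsize, hgcov⟩ := regFun_of_isRegularUF (hreg mu.ord.cof hsing)
  obtain ⟨Λ, hΛmono, hΛlt, hΛcof⟩ := exists_Lambda hlam
  -- the "measuring" functions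
  have hh : ∀ (α : (mu.ord.cof).out) (i : I), ∃ j : lam.ord.cof.ord.ToType,
      #(f α i) ≤ Λ j := fun α i => hΛcof _ (hfsize α i)
  choose h hhle using hh
  -- h α : I → Ω ;  germs
  rcases lt_trichotomy (germOrderCof D lam.ord.cof) mu.ord.cof with hC | hC | hC
  · -- small cofinality: find one cofinal fiber
    obtain ⟨S, hScard, hScof⟩ := germCof_achieved D lam.ord.cof
    have hy : ∀ α : (mu.ord.cof).out, ∃ y ∈ S,
        (↑(h α) : (D : Filter I).Germ lam.ord.cof.ord.ToType) ≤ y := fun α => hScof _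
    choose y hyS hyle using hy
    -- find a fiber over which mus is cofinal
    have hfiber : ∃ s : S, ∀ c < mu, ∃ α, y α = s.1 ∧ c < mus α := by
      by_contra hcon
      push_neg at hcon
      -- each fiber bounded
      choose cs hcslt hcsbd using hcon
      have hsup : (⨆ s : S, cs s) < mu := by
        refine Ordinal.iSup_lt ?_ hcslt
        rw [hScard]; exact hC
      obtain ⟨α, hα⟩ := hmuscof _ hsup
      have h1 := hcsbd ⟨y α, hyS α⟩ α rfl
      have h2 : cs ⟨y α, hyS α⟩ ≤ ⨆ s : S, cs s :=
        le_ciSup (Cardinal.bddAbove_range _) _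
      have h3 : mus α ≤ mus α := le_rfl
      -- hcsbd : mus α ≤ cs ... contradiction with hα
      exact (hα.trans_le (h1.trans h2)).false
    obtain ⟨s, hs⟩ := hfiber
    obtain ⟨H, hH⟩ : ∃ H : I → lam.ord.cof.ord.ToType,
        (↑H : (D : Filter I).Germ lam.ord.cof.ord.ToType) = s.1 :=
      s.1.inductionOn fun H => ⟨H, rfl⟩
    -- restrict to the fiber
    set T : Set (mu.ord.cof).out := {α | y α = s.1} with hT
    have hTev : ∀ α ∈ T, {i | h α i ≤ H i} ∈ D := by
      intro α hα
      have : (↑(h α) : (D : Filter I).Germ lam.ord.cof.ord.ToType) ≤ ↑H := by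
        rw [hH, ← hα]; exact hyle α
      rwa [Filter.Germ.coe_le] at this
    refine glue hlam (fun α : T => mus α.1) (fun c hc => ?_)
      (fun i => {α : T | α.1 ∈ g i ∧ #(f α.1 i) ≤ Λ (H i)}) (fun α => ?_)
      (fun α => f α.1) (fun α b => hfcov α.1 b)
      (fun i => Λ (H i)) (fun i => hΛlt _) (fun i => ?_) (fun i α hα => hα.2)
    · obtain ⟨α, hα1, hα2⟩ := hs c hc
      exact ⟨⟨α, hα1⟩, hα2⟩
    · -- selection is D-large
      have hsub : {i | α.1 ∈ g i} ∩ {i | h α.1 i ≤ H i} ⊆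
          {i | α ∈ {α : T | α.1 ∈ g i ∧ #(f α.1 i) ≤ Λ (H i)}} := by
        rintro i ⟨h1, h2⟩
        exact ⟨h1, (hhle α.1 i).trans (hΛmono h2)⟩
      exact Filter.mem_of_superset (Filter.inter_mem (hgcov α.1) (hTev α.1 α.2)) hsub
    · -- size of selection
      have hemb : {α : T | α.1 ∈ g i ∧ #(f α.1 i) ≤ Λ (H i)} ↪ g i :=
        ⟨fun α => ⟨α.1.1, α.2.1⟩, by
          rintro ⟨⟨a, ha⟩, h1⟩ ⟨⟨b, hb⟩, h2⟩ hab
          simp only [Subtype.mk.injEq] at hab ⊢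
          exact hab⟩
      exact (Cardinal.mk_le_of_injective hemb.injective).trans_lt (hgsize i)
  · exact absurd hC hne
  · -- large cofinality: all the h α are bounded
    have hbdd := bdd_of_card_lt_germCof
      (Set.range fun α : (mu.ord.cof).out =>
        (↑(h α) : (D : Filter I).Germ lam.ord.cof.ord.ToType))
      (lt_of_le_of_lt (Cardinal.mk_range_le.trans (by rw [Cardinal.mk_out])) hC)
    obtain ⟨H, hH⟩ := hbdd
    have hTev : ∀ α, {i | h α i ≤ H i} ∈ D := by
      intro α
      have := hH _ ⟨α, rfl⟩
      rwa [Filter.Germ.coe_le] at this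
    refine glue hlam mus hmuscof
      (fun i => {α | α ∈ g i ∧ #(f α i) ≤ Λ (H i)}) (fun α => ?_)
      f hfcov (fun i => Λ (H i)) (fun i => hΛlt _) (fun i => ?_) (fun i α hα => hα.2)
    · have hsub : {i | α ∈ g i} ∩ {i | h α i ≤ H i} ⊆
          {i | α ∈ {α | α ∈ g i ∧ #(f α i) ≤ Λ (H i)}} := by
        rintro i ⟨h1, h2⟩
        exact ⟨h1, (hhle α i).trans (hΛmono h2)⟩
      exact Filter.mem_of_superset (Filter.inter_mem (hgcov α) (hTev α)) hsub
    · exact (Cardinal.mk_le_mk_of_subset (fun α hα => hα.1)).trans_lt (hgsize i)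

end Aux

/-- Proposition 5.4: if `μ` is singular, `λ < μ`, `D` is `(λ, μ')`-regular for all
`μ' < μ`, and one of the conditions (a)-(d) holds, then `D` is `(λ, μ)`-regular. -/
theorem stmt10 {I : Type u} (D : Ultrafilter I) (lam mu : Cardinal.{u})
    (hlam : ℵ₀ ≤ lam) (hmu : ℵ₀ ≤ mu) (hsing : mu.ord.cof < mu) (hlt : lam < mu)
    (hreg : ∀ mu' < mu, IsRegularUF D lam mu')
    (hcase : lam.IsRegular ∨ IsRegularUF D lam.ord.cof mu.ord.cof ∨
      germOrderCof D lam.ord.cof ≠ mu.ord.cof ∨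
      (lam.ord.cof ≠ mu.ord.cof ∧ ¬ IsRegularUF D lam.ord.cof lam.ord.cof)) :
    IsRegularUF D lam mu := by
  have hmu' : ℵ₀ < mu := by
    rcases lt_or_eq_of_le hmu with h | h
    · exact h
    · exfalso
      rw [← h] at hsing
      rw [Cardinal.isRegular_aleph0.cof_eq] at hsing
      exact hsing.false
  rcases hcase with ha | hb | hc | ⟨hd1, hd2⟩
  · refine branchI hlam hmu' hsing hreg ?_
    rw [ha.cof_eq]
    exact regFun_of_isRegularUF (hreg _ hsing)
  · exact branchI hlam hmu' hsing hreg (regFun_of_isRegularUF hb)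
  · exact branchII hlam hmu' hsing hlt hreg hc
  · refine branchII hlam hmu' hsing hlt hreg ?_
    rw [caseD hlam hd2]
    exact hd1


end Paper
end

section
/- Let κ be a regular cardinal, D an ultrafilter on a set I, and f a κ-least function for D. Then for every infinite cardinal λ, D is (λ, κ)-regular if and only if {i ∈ I : cf f(i) < λ} ∈ D (where cf f(i) denotes the cofinality of the ordinal f(i)). -/
universe u

open Cardinal

namespace Paper

/-- Theorem 6.3: if `κ` is regular and `f` is a `κ`-least function for `D`, then
`D` is `(λ, κ)`-regular if and only if `{i : cf (f i) < λ} ∈ D`. -/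
theorem stmt12 {I : Type u} (D : Ultrafilter I) (κ : Cardinal.{u})
    (hκ : κ.IsRegular) (f : I → Ordinal.{u}) (hf : IsKLeastFunction D κ f)
    (lam : Cardinal.{u}) (hlam : ℵ₀ ≤ lam) :
    IsRegularUF D lam κ ↔ { i | (f i).cof < lam } ∈ D := by
  classical
  haveI : IsWellOrder κ.ord.ToType (· < ·) := isWellOrder_lt
  obtain ⟨e⟩ : Nonempty (κ.out ≃ κ.ord.ToType) := by
    rw [← Cardinal.eq, Cardinal.mk_out, Cardinal.mk_ord_toType]
  set o : κ.out → Ordinal.{u} := fun β => Ordinal.typein (α := κ.ord.ToType) (· < ·) (e β)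
    with ho
  have holt : ∀ β, o β < κ.ord := fun β => Ordinal.typein_lt_self (e β)
  have hoinj : Function.Injective o := fun β β' h =>
    e.injective (Ordinal.typein_injective _ h)
  have hosurj : ∀ α < κ.ord, ∃ β, o β = α := by
    intro α hα
    obtain ⟨a, ha⟩ := Ordinal.typein_surj (α := κ.ord.ToType) (· < ·)
      (by rwa [Ordinal.type_toType])
    exact ⟨e.symm a, by simpa [ho] using ha⟩
  have hordpos : (0 : Ordinal) < κ.ord := hκ.ord_pos
  have hordlim : Order.IsSuccLimit κ.ord := Cardinal.isSuccLimit_ord hκ.aleph0_le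
  constructor
  · rintro ⟨X, hX, hXB⟩
    by_contra hnot
    have hA : {i | lam ≤ (f i).cof} ∈ D := by
      have := (Ultrafilter.compl_mem_iff_notMem
        (s := {i | (f i).cof < lam})).2 hnot
      simpa [Set.compl_setOf, not_lt] using this
    set S : I → Set κ.out := fun i => {β | i ∈ X β ∧ o β < f i} with hSdef
    have hScard : ∀ i, #(S i) < lam := by
      intro i
      by_contra hge
      obtain ⟨p, hpsub, hpcard⟩ := Cardinal.le_mk_iff_exists_subset.1 (not_lt.1 hge)
      have hemp := hXB p hpcard
      have hi : i ∈ ⋂ β ∈ p, X β := Set.mem_iInter₂.2 fun β hβ => (hpsub hβ).1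
      rw [hemp] at hi
      exact hi
    set g0 : I → Ordinal.{u} := fun i => ⨆ β : S i, Order.succ (o β.1) with hg0
    have hbound : ∀ i, lam ≤ (f i).cof → g0 i < f i := by
      intro i hi
      have hlim : Order.IsSuccLimit (f i) := Ordinal.aleph0_le_cof.1 (hlam.trans hi)
      refine Ordinal.iSup_lt_ord (lt_of_lt_of_le (hScard i) hi) ?_
      rintro ⟨β, hβ⟩
      exact hlim.succ_lt hβ.2
    set g : I → Ordinal.{u} := fun i => if g0 i < f i then g0 i else 0 with hg
    have hglt : ∀ i, g i < κ.ord := by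
      intro i
      simp only [hg]
      split
      · exact lt_trans ‹_› (hf.1 i)
      · exact hordpos
    have hgf : {i | g i < f i} ∈ D := by
      refine Filter.mem_of_superset hA ?_
      intro i hi
      have h2 := hbound i hi
      simp only [hg, Set.mem_setOf_eq, if_pos h2]
      exact h2
    obtain ⟨α, hακ, hαD⟩ := hf.2.2 g hglt hgf
    obtain ⟨β0, hβ0⟩ := hosurj α hακ
    have hmem : (X β0 ∩ {i | o β0 < f i}) ∩ ({i | g i < α} ∩ {i | lam ≤ (f i).cof}) ∈ D :=
      Filter.inter_mem (Filter.inter_mem (hX β0) (by rw [hβ0]; exact hf.2.1 α hακ))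
        (Filter.inter_mem hαD hA)
    obtain ⟨i, ⟨⟨hi1, hi2⟩, hi3, hi4⟩⟩ := Filter.nonempty_of_mem
      (f := (D : Filter I)) hmem
    have hβS : β0 ∈ S i := ⟨hi1, hi2⟩
    have h1 : Order.succ (o β0) ≤ g0 i :=
      Ordinal.le_iSup (fun β : S i => Order.succ (o β.1)) ⟨β0, hβS⟩
    have h2 : g0 i < f i := hbound i hi4
    have h3 : g i = g0 i := if_pos h2
    have h4 : α < g i := by
      rw [h3]
      exact lt_of_lt_of_le (hβ0 ▸ Order.lt_succ (o β0)) h1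
    exact absurd hi3 (not_lt.2 h4.le)
  · intro hA
    choose ι c hlsub hcard using fun i => Ordinal.exists_lsub_cof (f i)
    have hsel0 : ∀ (γ : Ordinal.{u}) (i : I), γ < f i → ∃ j : ι i, γ ≤ c i j := by
      intro γ i h
      have : γ < Ordinal.lsub (c i) := by rw [hlsub i]; exact h
      exact Ordinal.lt_lsub_iff.1 this
    set sel : Ordinal.{u} → I → Ordinal.{u} := fun γ i =>
      if h : γ < f i then c i (hsel0 γ i h).choose else 0 with hseldef
    have hsel1 : ∀ γ i, γ < f i →
        γ ≤ sel γ i ∧ sel γ i < f i ∧ ∃ j, c i j = sel γ i := by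
      intro γ i h
      simp only [hseldef, dif_pos h]
      refine ⟨(hsel0 γ i h).choose_spec, ?_, ⟨_, rfl⟩⟩
      rw [← hlsub i]
      exact Ordinal.lt_lsub _ _
    have hbd : ∀ γ, γ < κ.ord → ∃ α, α < κ.ord ∧ {i | sel γ i < α} ∈ D := by
      intro γ hγ
      have hlt : ∀ i, sel γ i < κ.ord := by
        intro i
        by_cases h : γ < f i
        · exact lt_trans (hsel1 γ i h).2.1 (hf.1 i)
        · simpa only [hseldef, dif_neg h] using hordpos
      have hmemD : {i | sel γ i < f i} ∈ D :=
        Filter.mem_of_superset (hf.2.1 γ hγ) fun i hi => (hsel1 γ i hi).2.1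
      obtain ⟨α, h1, h2⟩ := hf.2.2 _ hlt hmemD
      exact ⟨α, h1, h2⟩
    set αf : Ordinal.{u} → Ordinal.{u} := fun γ =>
      if h : γ < κ.ord then (hbd γ h).choose else 0 with hαfdef
    have hαf : ∀ γ, ∀ h : γ < κ.ord, αf γ < κ.ord ∧ {i | sel γ i < αf γ} ∈ D := by
      intro γ h
      simp only [hαfdef, dif_pos h]
      exact ⟨(hbd γ h).choose_spec.1, (hbd γ h).choose_spec.2⟩
    set A' : Ordinal.{u} → Ordinal.{u} :=
      fun γ => max (Order.succ (αf γ)) (Order.succ γ) with hA'def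
    have hA'lt : ∀ γ, γ < κ.ord → A' γ < κ.ord := fun γ h =>
      max_lt (hordlim.succ_lt (hαf γ h).1) (hordlim.succ_lt h)
    have hA'α : ∀ γ, αf γ < A' γ := fun γ =>
      (Order.lt_succ _).trans_le (le_max_left _ _)
    set F : Ordinal.{u} → Ordinal.{u} :=
      Ordinal.lt_wf.fix (fun γ IH => Ordinal.bsup γ (fun η h => A' (IH η h))) with hFdef
    have hFeq : ∀ γ, F γ = Ordinal.bsup γ (fun η _ => A' (F η)) := fun γ =>
      WellFounded.fix_eq _ _ γ
    have hFmono : ∀ {η γ : Ordinal.{u}}, η < γ → A' (F η) ≤ F γ := by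
      intro η γ h
      rw [hFeq γ]
      exact Ordinal.le_bsup _ η h
    have hFlt : ∀ γ, γ < κ.ord → F γ < κ.ord := by
      intro γ
      induction γ using Ordinal.induction with
      | h γ IH =>
        intro hγ
        rw [hFeq γ]
        refine Ordinal.bsup_lt_ord ?_ ?_
        · rw [hκ.cof_eq]
          exact Cardinal.lt_ord.1 hγ
        · intro η hη
          exact hA'lt _ (IH η hη (hη.trans hγ))
    refine ⟨fun β => {i | (f i).cof < lam} ∩
      ({i | F (o β) < f i} ∩ {i | sel (F (o β)) i < αf (F (o β))}), ?_, ?_⟩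
    · intro β
      exact Filter.inter_mem hA (Filter.inter_mem
        (hf.2.1 _ (hFlt _ (holt β))) (hαf _ (hFlt _ (holt β))).2)
    · intro B hB
      rw [Set.eq_empty_iff_forall_notMem]
      intro i hi
      simp only [Set.mem_iInter, Set.mem_inter_iff, Set.mem_setOf_eq] at hi
      have hsel' : ∀ β ∈ B, F (o β) ≤ sel (F (o β)) i ∧
          sel (F (o β)) i < A' (F (o β)) ∧ ∃ j, c i j = sel (F (o β)) i := by
        intro β hβ
        obtain ⟨_, h2, h3⟩ := hi β hβ
        obtain ⟨ha, hb, hc⟩ := hsel1 _ i h2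
        exact ⟨ha, h3.trans (hA'α _), hc⟩
      have hBne : B.Nonempty := by
        rw [← Set.nonempty_coe_sort, ← Cardinal.mk_ne_zero_iff, hB]
        exact (Cardinal.aleph0_pos.trans_le hlam).ne'
      obtain ⟨β1, hβ1⟩ := hBne
      have hcofi : (f i).cof < lam := (hi β1 hβ1).1
      have hιne : Nonempty (ι i) :=
        ⟨(hsel0 0 i (zero_le.trans_lt (hi β1 hβ1).2.1)).choose⟩
      choose! j hj using fun β (hβ : β ∈ B) => (hsel' β hβ).2.2
      have hjinj : ∀ β ∈ B, ∀ β' ∈ B, j β = j β' → β = β' := by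
        intro β hβ β' hβ' hjj
        by_contra hne
        have hoo : o β ≠ o β' := fun h => hne (hoinj h)
        have hval : sel (F (o β)) i = sel (F (o β')) i := by
          rw [← hj β hβ, ← hj β' hβ', hjj]
        rcases hoo.lt_or_gt with h | h
        · have hcontr := (((hsel' β hβ).2.1.trans_le (hFmono h)).trans_le
            (hsel' β' hβ').1)
          rw [hval] at hcontr
          exact lt_irrefl _ hcontr
        · have hcontr := (((hsel' β' hβ').2.1.trans_le (hFmono h)).trans_le
            (hsel' β hβ).1)
          rw [← hval] at hcontr
          exact lt_irrefl _ hcontr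
      have hle : lam ≤ #(ι i) := by
        rw [← hB]
        exact Cardinal.mk_le_of_injective (f := fun β : B => j β.1)
          fun β β' h => Subtype.ext (hjinj _ β.2 _ β'.2 h)
      rw [hcard i] at hle
      exact absurd hcofi (not_lt.2 hle)


end Paper
end

section
/- Let λ be a singular cardinal and κ a cardinal with κ > λ, cf λ ≠ cf κ, and λ^{<λ} < κ. If the ultrafilter D is (λ⁺, κ)-regular, then D is either λ-decomposable or (λ', κ)-regular for some cardinal λ' < λ. -/
universe u

open Cardinal

namespace Paper

section Helpers

variable {I : Type u}


lemma aux_nondec {D : Ultrafilter I} {lam : Cardinal.{u}}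
    (h : ¬ IsDecomposable D lam) (f : I → lam.out) :
    ∃ X : Set lam.out, #X < lam ∧ f ⁻¹' X ∈ D := by
  unfold IsDecomposable at h
  push_neg at h
  obtain ⟨X, hX, hmem⟩ := h f
  exact ⟨X, hX, hmem⟩

lemma aux_succ_lt {lam c : Cardinal.{u}} (hlam : ℵ₀ ≤ lam)
    (hsing : lam.ord.cof < lam) (hc : c < lam) : Order.succ c < lam := by
  rcases lt_or_eq_of_le (Order.succ_le_of_lt hc) with h | h
  · exact h
  · exfalso
    rcases le_or_gt ℵ₀ c with hc0 | hc0
    · have hreg : Cardinal.IsRegular (Order.succ c) := isRegular_succ hc0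
      rw [h] at hreg
      exact hsing.ne hreg.cof_eq
    · have h1 : Order.succ c ≤ ℵ₀ := Order.succ_le_of_lt hc0
      have : lam = ℵ₀ := le_antisymm (h ▸ h1) hlam
      have hreg : Cardinal.IsRegular lam := this ▸ isRegular_aleph0
      exact hsing.ne hreg.cof_eq

lemma mult_of_reg {D : Ultrafilter I} {lam κ : Cardinal.{u}}
    (hreg : IsRegularUF D (Order.succ lam) κ) :
    ∃ X : κ.out → Set I, (∀ β, X β ∈ D) ∧ ∀ i, #{β | i ∈ X β} ≤ lam := by
  obtain ⟨X, h1, h2⟩ := hreg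
  refine ⟨X, h1, fun i => ?_⟩
  by_contra h
  push_neg at h
  have hle : Order.succ lam ≤ #{β | i ∈ X β} := Order.succ_le_of_lt h
  obtain ⟨B, hBsub, hBcard⟩ := Cardinal.le_mk_iff_exists_subset.mp hle
  have hB := h2 B hBcard
  have hi : i ∈ ⋂ β ∈ B, X β := Set.mem_iInter₂.mpr (fun β hβ => hBsub hβ)
  rw [hB] at hi
  exact hi

lemma reg_of_mult (D : Ultrafilter I) (σ κ : Cardinal.{u})
    (X : κ.out → Set I) (h1 : ∀ β, X β ∈ D) (h2 : ∀ i, #{β | i ∈ X β} ≤ σ) :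
    IsRegularUF D (Order.succ σ) κ := by
  refine ⟨X, h1, fun B hB => ?_⟩
  rw [Set.eq_empty_iff_forall_notMem]
  intro i hi
  have hsub : B ⊆ {β | i ∈ X β} := fun β hβ => (Set.mem_iInter₂.mp hi) β hβ
  have hc : #B ≤ σ := (Cardinal.mk_le_mk_of_subset hsub).trans (h2 i)
  rw [hB] at hc
  exact (Order.lt_succ σ).not_ge hc



lemma unif {T : Type u} {lam κ' : Cardinal.{u}} (hlam : ℵ₀ ≤ lam)
    (hsing : lam.ord.cof < lam) (hκ' : lam < κ')
    (hcof : lam.ord.cof ≠ κ'.ord.cof)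
    (c : T → Cardinal.{u}) (hc : ∀ β, c β < lam) (hT : #T = κ') :
    ∃ μ, μ < lam ∧ #{β | c β ≤ μ} = κ' := by
  by_contra hcon
  push_neg at hcon
  have hle : ∀ μ : Cardinal.{u}, #{β | c β ≤ μ} ≤ κ' := fun μ => by
    rw [← hT]; exact Cardinal.mk_set_le _
  have hlt : ∀ μ, μ < lam → #{β | c β ≤ μ} < κ' :=
    fun μ hμ => lt_of_le_of_ne (hle μ) (hcon μ hμ)
  obtain ⟨iL, fL, hlsubL, hcardL⟩ := Ordinal.exists_lsub_cof lam.ord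
  set g : iL → Cardinal.{u} := fun ξ => (fL ξ).card with hg
  have hgL : ∀ ξ, g ξ < lam := fun ξ => by
    have : fL ξ < lam.ord := hlsubL ▸ Ordinal.lt_lsub fL ξ
    exact Cardinal.lt_ord.mp this
  have hcover : ∀ β, ∃ ξ, c β ≤ g ξ := fun β => by
    have h1 : (c β).ord < Ordinal.lsub fL := by
      rw [hlsubL]; exact Cardinal.ord_lt_ord.mpr (hc β)
    obtain ⟨ξ, hξ⟩ := Ordinal.lt_lsub_iff.mp h1
    exact ⟨ξ, Cardinal.ord_le.mp hξ⟩
  have hne : Nonempty iL := by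
    rw [← Cardinal.mk_ne_zero_iff, hcardL]
    intro h0
    have := Ordinal.aleph0_le_cof.mpr (Cardinal.isSuccLimit_ord hlam)
    rw [h0] at this
    exact Cardinal.aleph0_ne_zero (le_antisymm this (Cardinal.zero_le _))
  set S : Cardinal.{u} := ⨆ ξ, #{β | c β ≤ g ξ} with hS
  have hSκ : S ≤ κ' := ciSup_le' (fun ξ => hle _)
  have hκS : κ' ≤ S := by
    by_contra hcontra
    push_neg at hcontra
    have hcov2 : (Set.univ : Set T) = ⋃ ξ, {β | c β ≤ g ξ} := by
      ext β
      simp only [Set.mem_univ, Set.mem_iUnion, Set.mem_setOf_eq, true_iff]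
      exact hcover β
    have h1 : κ' ≤ #iL * S := by
      calc κ' = #T := hT.symm
        _ = #(Set.univ : Set T) := by rw [Cardinal.mk_univ]
        _ = #(⋃ ξ, {β | c β ≤ g ξ}) := by rw [hcov2]
        _ ≤ #iL * S := Cardinal.mk_iUnion_le _
    have h2 : #iL * S ≤ max (max (#iL) S) ℵ₀ := Cardinal.mul_le_max _ _
    have hν : #iL < κ' := by rw [hcardL]; exact hsing.trans hκ'
    have : max (max (#iL) S) ℵ₀ < κ' := by
      apply max_lt (max_lt hν hcontra) (hlam.trans_lt hκ')
    exact absurd (h1.trans h2) this.not_ge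
  rcases hcof.lt_or_gt with hθ | hθ
  · -- cof lam.ord < cof κ'.ord : here the "ν < θ" case
    have hord : ∀ ξ, (#{β | c β ≤ g ξ}).ord < κ'.ord :=
      fun ξ => Cardinal.ord_lt_ord.mpr (hlt _ (hgL ξ))
    have hsup : (⨆ ξ, (#{β | c β ≤ g ξ}).ord) < κ'.ord := by
      apply Ordinal.iSup_lt_ord _ hord
      rw [hcardL]; exact hθ
    have hSle : S ≤ ((⨆ ξ, (#{β | c β ≤ g ξ}).ord)).card := by
      apply ciSup_le'
      intro ξ
      have h1 : (#{β | c β ≤ g ξ}).ord ≤ ⨆ ξ, (#{β | c β ≤ g ξ}).ord :=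
        le_ciSup (Ordinal.bddAbove_range _) ξ
      have := Ordinal.card_le_card h1
      rwa [Cardinal.card_ord] at this
    have : S < κ' := hSle.trans_lt (Cardinal.lt_ord.mp hsup)
    exact absurd hκS this.not_ge
  · -- cof κ'.ord < cof lam.ord
    obtain ⟨iK, fK, hlsubK, hcardK⟩ := Ordinal.exists_lsub_cof κ'.ord
    have hcards : ∀ η, (fK η).card < κ' := fun η => by
      have : fK η < κ'.ord := hlsubK ▸ Ordinal.lt_lsub fK η
      exact Cardinal.lt_ord.mp this
    have hpick : ∀ η, ∃ ξ, (fK η).card < #{β | c β ≤ g ξ} := by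
      intro η
      by_contra hno
      push_neg at hno
      have : S ≤ (fK η).card := ciSup_le' hno
      exact absurd (hκS.trans this) (hcards η).not_ge
    choose ξof hξof using hpick
    have hbsup : (⨆ η, fL (ξof η)) < lam.ord := by
      apply Ordinal.iSup_lt_ord
      · rw [hcardK]; exact hθ
      · intro η; exact hlsubL ▸ Ordinal.lt_lsub fL (ξof η)
    set μs : Cardinal.{u} := (⨆ η, fL (ξof η)).card with hμs
    have hμlt : μs < lam := Cardinal.lt_ord.mp hbsup
    have hmono : ∀ η, #{β | c β ≤ g (ξof η)} ≤ #{β | c β ≤ μs} := by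
      intro η
      apply Cardinal.mk_le_mk_of_subset
      intro β hβ
      have h1 : fL (ξof η) ≤ ⨆ η, fL (ξof η) := le_ciSup (Ordinal.bddAbove_range _) η
      have h2 : g (ξof η) ≤ μs := Ordinal.card_le_card h1
      exact le_trans hβ h2
    set x : Cardinal.{u} := #{β | c β ≤ μs} with hx
    have hbig : ∀ η, (fK η).card < x := fun η => (hξof η).trans_le (hmono η)
    have hxκ : κ' ≤ x := by
      by_contra hcontra
      push_neg at hcontra
      have hsucc : ∀ η, fK η < (Order.succ x).ord := by
        intro η
        rw [Cardinal.lt_ord]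
        exact ((hbig η).le).trans_lt (Order.lt_succ x)
      have h1 : κ'.ord ≤ (Order.succ x).ord := hlsubK ▸ Ordinal.lsub_le hsucc
      have h2 : κ' ≤ Order.succ x := Cardinal.ord_le_ord.mp h1
      have h3 : Order.succ x ≤ κ' := Order.succ_le_of_lt hcontra
      have h4 : κ' = Order.succ x := le_antisymm h2 h3
      have hx0 : ℵ₀ ≤ x := by
        by_contra hx0
        push_neg at hx0
        have : Order.succ x ≤ ℵ₀ := Order.succ_le_of_lt hx0
        rw [← h4] at this
        exact absurd (hlam.trans_lt hκ') this.not_gt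
      have hreg : Cardinal.IsRegular κ' := h4 ▸ isRegular_succ hx0
      have : κ'.ord.cof = κ' := hreg.cof_eq
      rw [this] at hθ
      exact absurd (hθ.trans (hsing.trans hκ')) (lt_irrefl κ')
    exact hcon μs hμlt (le_antisymm (hle μs) hxκ)



lemma mk_small_sets (lam μ : Cardinal.{u}) (hμ : μ < lam) (hlam : ℵ₀ ≤ lam) :
    #{V : Set lam.out // #V ≤ μ} ≤ lam ^< lam := by
  classical
  have hemb : ∀ V : {V : Set lam.out // #V ≤ μ}, Nonempty (↥V.1 ↪ μ.out) := by
    intro V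
    rw [← Cardinal.le_def, Cardinal.mk_out]
    exact V.2
  set e : ∀ V : {V : Set lam.out // #V ≤ μ}, ↥V.1 ↪ μ.out :=
    fun V => (hemb V).some with he
  set F : {V : Set lam.out // #V ≤ μ} → (μ.out → Option lam.out) :=
    fun V m => if h : ∃ v : ↥V.1, e V v = m then some (h.choose : ↥V.1).1 else none with hF
  have hFval : ∀ V (x : lam.out) (hx : x ∈ V.1), F V (e V ⟨x, hx⟩) = some x := by
    intro V x hx
    have h : ∃ v : ↥V.1, e V v = e V ⟨x, hx⟩ := ⟨⟨x, hx⟩, rfl⟩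
    simp only [hF, dif_pos h]
    congr 1
    have := h.choose_spec
    have h2 : h.choose = ⟨x, hx⟩ := (e V).injective this
    rw [h2]
  have hFmem : ∀ V (m : μ.out) (x : lam.out), F V m = some x → x ∈ V.1 := by
    intro V m x hFx
    by_cases h : ∃ v : ↥V.1, e V v = m
    · simp only [hF, dif_pos h] at hFx
      have := (h.choose : ↥V.1).2
      rwa [Option.some_inj.mp hFx] at this
    · simp only [hF] at hFx
      rw [dif_neg h] at hFx
      cases hFx
  have hinj : Function.Injective F := by
    intro V W hVW
    apply Subtype.ext
    apply Set.eq_of_subset_of_subset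
    · intro x hx
      have h1 : F W (e V ⟨x, hx⟩) = some x := by rw [← hVW]; exact hFval V x hx
      exact hFmem W _ x h1
    · intro x hx
      have h1 : F V (e W ⟨x, hx⟩) = some x := by rw [hVW]; exact hFval W x hx
      exact hFmem V _ x h1
  have h1 : #{V : Set lam.out // #V ≤ μ} ≤ #(μ.out → Option lam.out) :=
    Cardinal.mk_le_of_injective hinj
  have h2 : #(μ.out → Option lam.out) = (#(Option lam.out)) ^ (#μ.out) :=
    (Cardinal.power_def _ _).symm
  have h3 : #(Option lam.out) = lam := by
    rw [Cardinal.mk_option, Cardinal.mk_out]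
    exact Cardinal.add_one_eq hlam
  have h4 : (#(Option lam.out)) ^ (#μ.out) = lam ^ μ := by
    rw [h3, Cardinal.mk_out]
  calc #{V : Set lam.out // #V ≤ μ} ≤ lam ^ μ := by rw [← h4, ← h2]; exact h1
    _ ≤ lam ^< lam := Cardinal.le_powerlt lam hμ

lemma exists_fiber {A B : Type u} (φ : A → B) {R : Cardinal.{u}}
    (hR : Cardinal.IsRegular R) (hA : #A = R) (hB : #B < R) :
    ∃ b, #{a | φ a = b} = R := by
  by_contra hcon
  push_neg at hcon
  have hlt : ∀ b, #{a | φ a = b} < R := by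
    intro b
    refine lt_of_le_of_ne ?_ (hcon b)
    rw [← hA]
    exact Cardinal.mk_set_le _
  have h1 : #A = Cardinal.sum (fun b => #{a | φ a = b}) := by
    rw [← Cardinal.mk_sigma]
    exact Cardinal.mk_congr (Equiv.sigmaFiberEquiv φ).symm
  have h2 : Cardinal.sum (fun b => #{a | φ a = b}) < R :=
    Cardinal.sum_lt_of_isRegular hR hB hlt
  rw [← h1, hA] at h2
  exact lt_irrefl R h2

lemma ext_lemma {I T : Type u} (D : Ultrafilter I) {lam : Cardinal.{u}} (hlam : ℵ₀ ≤ lam)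
    (hnd : ¬ IsDecomposable D lam) (X : T → Set I) (hXD : ∀ β, X β ∈ D)
    (hm : ∀ i, #{β | i ∈ X β} ≤ lam) :
    ∃ (e : I → T → lam.out) (V : T → Set lam.out),
      (∀ i, Set.InjOn (e i) {β | i ∈ X β}) ∧
      ∀ β, #(V β) < lam ∧ (X β ∩ {i | e i β ∈ V β}) ∈ D := by
  classical
  have hne : Nonempty lam.out := by
    rw [← Cardinal.mk_ne_zero_iff, Cardinal.mk_out]
    intro h0
    rw [h0] at hlam
    exact Cardinal.aleph0_ne_zero (le_antisymm hlam (Cardinal.zero_le _))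
  have hstep : ∀ i : I, ∃ e : T → lam.out, Set.InjOn e {β | i ∈ X β} := by
    intro i
    have h1 : #{β | i ∈ X β} ≤ #lam.out := by rw [Cardinal.mk_out]; exact hm i
    obtain ⟨g⟩ := (Cardinal.le_def _ _).mp h1
    refine ⟨fun β => if h : i ∈ X β then g ⟨β, h⟩ else Classical.arbitrary _, ?_⟩
    intro β hβ β' hβ' heq
    simp only [Set.mem_setOf_eq] at hβ hβ'
    simp only at heq
    rw [dif_pos hβ, dif_pos hβ'] at heq
    have := g.injective heq
    exact congrArg Subtype.val this
  choose e he using hstep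
  have hV : ∀ β : T, ∃ V : Set lam.out, #V < lam ∧ (fun i => e i β) ⁻¹' V ∈ D :=
    fun β => aux_nondec hnd _
  choose V hV1 hV2 using hV
  refine ⟨e, V, he, fun β => ⟨hV1 β, ?_⟩⟩
  have h2 : (X β ∩ {i | e i β ∈ V β}) = X β ∩ (fun i => e i β) ⁻¹' (V β) := rfl
  rw [h2]
  exact Filter.inter_mem (hXD β) (hV2 β)


lemma stepA {I : Type u} (D : Ultrafilter I) {lam : Cardinal.{u}} (hlam : ℵ₀ ≤ lam)
    (hsing : lam.ord.cof < lam) (hnd : ¬ IsDecomposable D lam)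
    {T : Type u} (hT : #T = Order.succ (lam ^< lam))
    (X : T → Set I) (hXD : ∀ β, X β ∈ D) (hm : ∀ i, #{β | i ∈ X β} ≤ lam) :
    ∃ σ, σ < lam ∧ ∃ W : T → Set I, (∀ β, W β ∈ D) ∧ ∀ i, #{β | i ∈ W β} ≤ σ := by
  classical
  set R := Order.succ (lam ^< lam) with hR
  have hpl : lam ≤ lam ^< lam := by
    have h1 : lam ^ (1 : Cardinal.{u}) ≤ lam ^< lam :=
      Cardinal.le_powerlt lam (lt_of_lt_of_le Cardinal.one_lt_aleph0 hlam)
    rwa [Cardinal.power_one] at h1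
  have hRreg : Cardinal.IsRegular R := isRegular_succ (hlam.trans hpl)
  have hlamR : lam < R := hpl.trans_lt (Order.lt_succ _)
  obtain ⟨e, V, he, hV⟩ := ext_lemma D hlam hnd X hXD hm
  have hcofR : lam.ord.cof ≠ R.ord.cof := by
    rw [hRreg.cof_eq]
    exact ne_of_lt (hsing.trans hlamR)
  obtain ⟨μ, hμ, hK⟩ := unif hlam hsing hlamR hcofR (fun β => #(V β)) (fun β => (hV β).1) hT
  set φ : {β | #(V β) ≤ μ} → {V' : Set lam.out // #V' ≤ μ} := fun b => ⟨V b.1, b.2⟩ with hφ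
  have h𝒱 : #{V' : Set lam.out // #V' ≤ μ} < R :=
    (mk_small_sets lam μ hμ hlam).trans_lt (Order.lt_succ _)
  obtain ⟨v0, hv0⟩ := exists_fiber φ hRreg hK h𝒱
  have hTfib : #T = #{a | φ a = v0} := by rw [hT, hv0]
  obtain ⟨ψ⟩ := Cardinal.eq.mp hTfib
  set b : T → T := fun β => ((ψ β : {β | #(V β) ≤ μ}) : T) with hb
  have hbV : ∀ β, V (b β) = v0.1 := by
    intro β
    have h2 := (ψ β).2
    simp only [Set.mem_setOf_eq, hφ] at h2
    exact congrArg Subtype.val h2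
  have hbinj : Function.Injective b := by
    intro β β' hββ'
    have h1 : (ψ β : {β | #(V β) ≤ μ}) = (ψ β' : {β | #(V β) ≤ μ}) := Subtype.ext hββ'
    have h2 : ψ β = ψ β' := Subtype.ext h1
    exact ψ.injective h2
  refine ⟨μ, hμ, fun β => X (b β) ∩ {i | e i (b β) ∈ V (b β)}, fun β => (hV _).2, ?_⟩
  intro i
  have hinj : Function.Injective
      (fun x : {β | i ∈ X (b β) ∩ {i | e i (b β) ∈ V (b β)}} =>
        (⟨e i (b x.1), by
          have hx := x.2
          simp only [Set.mem_setOf_eq, Set.mem_inter_iff] at hx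
          rw [← hbV x.1]
          exact hx.2⟩ : ↥v0.1)) := by
    intro x y hxy
    have h1 : e i (b x.1) = e i (b y.1) := congrArg Subtype.val hxy
    have hx := x.2
    have hy := y.2
    simp only [Set.mem_setOf_eq, Set.mem_inter_iff] at hx hy
    have h2 : b x.1 = b y.1 := he i hx.1 hy.1 h1
    exact Subtype.ext (hbinj h2)
  have h3 : #{β | i ∈ X (b β) ∩ {i | e i (b β) ∈ V (b β)}} ≤ #↥v0.1 :=
    Cardinal.mk_le_of_injective hinj
  exact h3.trans v0.2

end Helpers

/-- Theorem 6.5(b): if `λ` is singular, `κ > λ`, `cf λ ≠ cf κ`, `λ^{<λ} < κ` and `D`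
is `(λ⁺, κ)`-regular, then `D` is either `λ`-decomposable or `(λ', κ)`-regular for
some `λ' < λ`. -/
theorem stmt14 {I : Type u} (D : Ultrafilter I) (lam κ : Cardinal.{u})
    (hlam : ℵ₀ ≤ lam) (hsing : lam.ord.cof < lam)
    (hκ : lam < κ) (hcof : lam.ord.cof ≠ κ.ord.cof) (hpow : lam ^< lam < κ)
    (hreg : IsRegularUF D (Order.succ lam) κ) :
    IsDecomposable D lam ∨ ∃ lam' < lam, IsRegularUF D lam' κ := by
  classical
  by_cases hdec : IsDecomposable D lam
  · exact Or.inl hdec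
  right
  obtain ⟨X, hXD, hm⟩ := mult_of_reg hreg
  obtain ⟨e, V, he, hV⟩ := ext_lemma D hlam hdec X hXD hm
  have hT : #κ.out = κ := Cardinal.mk_out κ
  obtain ⟨μκ, hμκ, hK⟩ := unif hlam hsing hκ hcof (fun β => #(V β)) (fun β => (hV β).1) hT
  set R := Order.succ (lam ^< lam) with hR
  have hRκ : R ≤ κ := Order.succ_le_of_lt hpow
  have hembR : Nonempty (R.out ↪ κ.out) := by
    rw [← Cardinal.le_def, Cardinal.mk_out, Cardinal.mk_out]
    exact hRκ
  obtain ⟨gR⟩ := hembR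
  set X' : R.out → Set I := fun ρ => X (gR ρ) with hX'
  have hX'D : ∀ ρ, X' ρ ∈ D := fun ρ => hXD _
  have hm' : ∀ i, #{ρ | i ∈ X' ρ} ≤ lam := by
    intro i
    have hinj : Function.Injective
        (fun x : {ρ | i ∈ X' ρ} => (⟨gR x.1, x.2⟩ : {β | i ∈ X β})) := by
      intro x y hxy
      have h1 : gR x.1 = gR y.1 := congrArg Subtype.val hxy
      exact Subtype.ext (gR.injective h1)
    exact (Cardinal.mk_le_of_injective hinj).trans (hm i)
  obtain ⟨σR, hσR, W', hW'D, hW'm⟩ :=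
    stepA D hlam hsing hdec (Cardinal.mk_out R) X' hX'D hm'
  have h𝒱R : #{V' : Set lam.out // #V' ≤ μκ} ≤ #R.out := by
    rw [Cardinal.mk_out]
    exact (mk_small_sets lam μκ hμκ hlam).trans (le_of_lt (Order.lt_succ _))
  obtain ⟨ιV⟩ := (Cardinal.le_def _ _).mp h𝒱R
  set Z : {V' : Set lam.out // #V' ≤ μκ} → Set I := fun v => W' (ιV v) with hZ
  have hTK : #κ.out = #{β | #(V β) ≤ μκ} := by rw [hT, hK]
  obtain ⟨ψ⟩ := Cardinal.eq.mp hTK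
  set b : κ.out → κ.out := fun γ => ((ψ γ : {β | #(V β) ≤ μκ}) : κ.out) with hb
  have hbV : ∀ γ, #(V (b γ)) ≤ μκ := fun γ => (ψ γ).2
  have hbinj : Function.Injective b := by
    intro γ γ' hγγ'
    exact ψ.injective (Subtype.ext hγγ')
  set W : κ.out → Set I :=
    fun γ => (X (b γ) ∩ {i | e i (b γ) ∈ V (b γ)}) ∩ Z ⟨V (b γ), hbV γ⟩ with hW
  have hWD : ∀ γ, W γ ∈ D := fun γ => Filter.inter_mem (hV _).2 (hW'D _)
  set σ' := σR * μκ with hσ'def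
  have hσ' : σ' < lam := Cardinal.mul_lt_of_lt hlam hσR hμκ
  have hmult : ∀ i, #{γ | i ∈ W γ} ≤ σ' := by
    intro i
    set U : Set lam.out :=
      ⋃ w ∈ {w : {V' : Set lam.out // #V' ≤ μκ} | i ∈ Z w}, (w.1 : Set lam.out) with hUdef
    have hU : #U ≤ σ' := by
      have h1 := Cardinal.mk_biUnion_le (fun w : {V' : Set lam.out // #V' ≤ μκ} => w.1)
        {w : {V' : Set lam.out // #V' ≤ μκ} | i ∈ Z w}
      have h2 : #{w : {V' : Set lam.out // #V' ≤ μκ} | i ∈ Z w} ≤ σR := by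
        have hinj2 : Function.Injective
            (fun x : {w : {V' : Set lam.out // #V' ≤ μκ} | i ∈ Z w} =>
              (⟨ιV x.1, x.2⟩ : {ρ | i ∈ W' ρ})) := by
          intro x y hxy
          have h1' : ιV x.1 = ιV y.1 := congrArg Subtype.val hxy
          exact Subtype.ext (ιV.injective h1')
        exact (Cardinal.mk_le_of_injective hinj2).trans (hW'm i)
      have h3 : (⨆ w : {w : {V' : Set lam.out // #V' ≤ μκ} | i ∈ Z w}, #(w.1.1 : Set lam.out)) ≤ μκ :=
        ciSup_le' (fun w => w.1.2)
      exact h1.trans (mul_le_mul' h2 h3)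
    have hinj : Function.Injective
        (fun x : {γ | i ∈ W γ} =>
          (⟨e i (b x.1), by
            have hx := x.2
            simp only [hW, Set.mem_setOf_eq, Set.mem_inter_iff] at hx
            refine Set.mem_biUnion (show (⟨V (b x.1), hbV x.1⟩ :
              {V' : Set lam.out // #V' ≤ μκ}) ∈ {w | i ∈ Z w} from hx.2) hx.1.2⟩ : ↥U)) := by
      intro x y hxy
      have h1' : e i (b x.1) = e i (b y.1) := congrArg Subtype.val hxy
      have hx := x.2
      have hy := y.2
      simp only [hW, Set.mem_setOf_eq, Set.mem_inter_iff] at hx hy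
      have h2' : b x.1 = b y.1 := he i hx.1.1 hy.1.1 h1'
      exact Subtype.ext (hbinj h2')
    exact (Cardinal.mk_le_of_injective hinj).trans hU
  exact ⟨Order.succ σ', aux_succ_lt hlam hsing hσ',
    reg_of_mult D σ' κ W hWD hmult⟩

end Paper
end

section
/- Let D and D' be ultrafilters and λ, μ infinite cardinals. Then D × D' is (λ, μ)-regular if and only if there is a cardinal ν such that D is (ν, μ)-regular and D' is (λ, ν')-regular for every infinite cardinal ν' < ν. In particular, D × D' is (λ, λ)-regular if and only if either D is (λ, λ)-regular or D' is (λ, λ)-regular. -/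
universe u

open Cardinal

namespace Paper

lemma mem_uprod {I I' : Type u} {D : Ultrafilter I} {D' : Ultrafilter I'}
    {X : Set (I × I')} :
    X ∈ uprod D D' ↔ {i | {i' | (i, i') ∈ X} ∈ D'} ∈ D := by
  show X ∈ ((D : Filter I).bind fun i => Filter.map (fun i' => (i, i')) ↑D') ↔ _
  simp only [Filter.mem_bind, Filter.mem_map, Set.preimage, Ultrafilter.mem_coe]
  exact ⟨fun ⟨t, ht, h⟩ => D.toFilter.mem_of_superset ht h, fun h => ⟨_, h, fun _ hx => hx⟩⟩

lemma regular_mono_left {I : Type u} {D : Ultrafilter I} {a a' b : Cardinal.{u}}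
    (h : a ≤ a') (hr : IsRegularUF D a b) : IsRegularUF D a' b := by
  obtain ⟨X, hX, hB⟩ := hr
  refine ⟨X, hX, fun B hBcard => ?_⟩
  obtain ⟨B₀, hsub, hcard⟩ := Cardinal.le_mk_iff_exists_subset.1 (hBcard ▸ h)
  refine Set.eq_empty_of_subset_empty ((hB B₀ hcard) ▸ ?_)
  exact fun i hi => Set.mem_biInter fun β hβ => Set.mem_iInter₂.1 hi β (hsub hβ)

lemma regular_mono_right {I : Type u} {D : Ultrafilter I} {a b b' : Cardinal.{u}}
    (h : b' ≤ b) (hr : IsRegularUF D a b) : IsRegularUF D a b' := by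
  obtain ⟨X, hX, hB⟩ := hr
  obtain ⟨f⟩ : Nonempty (b'.out ↪ b.out) := by
    rw [← Cardinal.le_def, Cardinal.mk_out, Cardinal.mk_out]; exact h
  refine ⟨fun γ => X (f γ), fun γ => hX _, fun B' hB' => ?_⟩
  have himg : #(f '' B' : Set b.out) = a := by rw [Cardinal.mk_image_eq f.injective, hB']
  refine Set.eq_empty_of_subset_empty ((hB _ himg) ▸ fun i hi => ?_)
  exact Set.mem_biInter fun β hβ => by
    obtain ⟨γ, hγ, rfl⟩ := hβ
    exact Set.mem_iInter₂.1 hi γ hγ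

lemma main {I I' : Type u} (D : Ultrafilter I) (D' : Ultrafilter I')
    (lam mu : Cardinal.{u}) (hlam : ℵ₀ ≤ lam) :
    IsRegularUF (uprod D D') lam mu ↔
      ∃ ν : Cardinal.{u}, IsRegularUF D ν mu ∧
        ∀ ν', ℵ₀ ≤ ν' → ν' < ν → IsRegularUF D' lam ν' := by
  constructor
  · rintro ⟨X, hXmem, hXint⟩
    set Y : mu.out → Set I := fun β => {i | {i' | (i, i') ∈ X β} ∈ D'} with hYdef
    have hYmem : ∀ β, Y β ∈ D := fun β => mem_uprod.1 (hXmem β)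
    set Z : I → Set mu.out := fun i => {β | i ∈ Y β} with hZdef
    set S : Set Cardinal.{u} := {c | ∀ i, #(Z i) < c} with hSdef
    have hSne : S.Nonempty := by
      refine ⟨Order.succ mu, fun i => Order.lt_succ_iff.2 ?_⟩
      calc #(Z i) ≤ #mu.out := Cardinal.mk_set_le _
        _ = mu := Cardinal.mk_out mu
    set ν := sInf S with hν
    have hνS : ν ∈ S := csInf_mem hSne
    refine ⟨ν, ⟨Y, hYmem, fun B hB => ?_⟩, fun ν' hν'inf hν'lt => ?_⟩
    · by_contra hne
      obtain ⟨i, hi⟩ := Set.nonempty_iff_ne_empty.2 hne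
      have hsub : B ⊆ Z i := fun β hβ => Set.mem_iInter₂.1 hi β hβ
      exact absurd (hB ▸ Cardinal.mk_le_mk_of_subset hsub) (not_le.2 (hνS i))
    · have hν'S : ν' ∉ S := fun h => absurd (csInf_le (OrderBot.bddBelow S) h) (not_le.2 hν'lt)
      simp only [hSdef, Set.mem_setOf_eq, not_forall, not_lt] at hν'S
      obtain ⟨i, hi⟩ := hν'S
      obtain ⟨f⟩ : Nonempty (ν'.out ↪ Z i) := by
        rw [← Cardinal.le_def, Cardinal.mk_out]; exact hi
      refine ⟨fun γ => {i' | (i, i') ∈ X (f γ)}, fun γ => (f γ).2, fun B' hB' => ?_⟩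
      have hinj : Function.Injective (fun γ : ν'.out => ((f γ : mu.out))) :=
        fun x y hxy => f.injective (Subtype.ext hxy)
      have himg : #((fun γ : ν'.out => ((f γ : mu.out))) '' B') = lam := by
        rw [Cardinal.mk_image_eq hinj, hB']
      have hempty := hXint _ himg
      refine Set.eq_empty_of_subset_empty fun i' hi' => ?_
      have : (i, i') ∈ ⋂ β ∈ (fun γ : ν'.out => ((f γ : mu.out))) '' B', X β := by
        refine Set.mem_biInter fun β hβ => ?_
        obtain ⟨γ, hγ, rfl⟩ := hβ
        exact Set.mem_iInter₂.1 hi' γ hγ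
      rw [hempty] at this
      exact this
  · rintro ⟨ν, ⟨Y, hYmem, hYint⟩, hν'⟩
    set Z : I → Set mu.out := fun i => {β | i ∈ Y β} with hZdef
    have hZlt : ∀ i, #(Z i) < ν := by
      intro i
      by_contra hge
      rw [not_lt] at hge
      obtain ⟨B, hsub, hcard⟩ := Cardinal.le_mk_iff_exists_subset.1 hge
      have : i ∈ ⋂ β ∈ B, Y β := Set.mem_biInter fun β hβ => hsub hβ
      rw [hYint B hcard] at this
      exact this
    have hW : ∀ i, ∃ W : Z i → Set I', (∀ z, W z ∈ D') ∧
        (ℵ₀ ≤ #(Z i) → ∀ B : Set (Z i), #B = lam → ⋂ z ∈ B, W z = ∅) := by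
      intro i
      by_cases h : ℵ₀ ≤ #(Z i)
      · obtain ⟨W0, hW0mem, hW0int⟩ := hν' (#(Z i)) h (hZlt i)
        obtain ⟨e⟩ : Nonempty ((Z i : Set mu.out) ≃ (#(Z i)).out) :=
          Cardinal.eq.1 (Cardinal.mk_out #(Z i)).symm
        refine ⟨fun z => W0 (e z), fun z => hW0mem _, fun _ B hB => ?_⟩
        have himg : #(e '' B) = lam := by
          rw [Cardinal.mk_image_eq e.injective, hB]
        refine Set.eq_empty_of_subset_empty fun i' hi' => ?_
        have : i' ∈ ⋂ w ∈ e '' B, W0 w := by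
          refine Set.mem_biInter fun w hw => ?_
          obtain ⟨z, hz, rfl⟩ := hw
          exact Set.mem_iInter₂.1 hi' z hz
        rw [hW0int _ himg] at this
        exact this
      · exact ⟨fun _ => Set.univ, fun _ => Filter.univ_mem, fun h' => absurd h' h⟩
    choose W hWmem hWint using hW
    refine ⟨fun β => {p : I × I' | ∃ h : p.1 ∈ Y β, p.2 ∈ W p.1 ⟨β, h⟩}, fun β => ?_, ?_⟩
    · rw [mem_uprod]
      refine (D : Filter I).mem_of_superset (hYmem β) fun i hi => ?_
      refine (D' : Filter I').mem_of_superset (hWmem i ⟨β, hi⟩) fun i' hi' => ?_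
      exact ⟨hi, hi'⟩
    · intro B hB
      refine Set.eq_empty_of_subset_empty fun p hp => ?_
      obtain ⟨i, i'⟩ := p
      have hmem : ∀ β ∈ B, ∃ h : i ∈ Y β, i' ∈ W i ⟨β, h⟩ :=
        fun β hβ => Set.mem_iInter₂.1 hp β hβ
      have hsub : B ⊆ Z i := fun β hβ => (hmem β hβ).1
      have hinf : ℵ₀ ≤ #(Z i) :=
        le_trans hlam (hB ▸ Cardinal.mk_le_mk_of_subset hsub)
      set B' : Set (Z i) := Subtype.val ⁻¹' B with hB'def
      have hB' : #B' = lam := by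
        rw [hB'def, Cardinal.mk_preimage_of_injective_of_subset_range _ _
          Subtype.val_injective (by rw [Subtype.range_coe]; exact hsub), hB]
      have : i' ∈ ⋂ z ∈ B', W i z := by
        refine Set.mem_biInter fun z hz => ?_
        obtain ⟨h, hw⟩ := hmem z hz
        exact hw
      rw [hWint i hinf B' hB'] at this
      exact this


/-- Proposition 7.1: `D × D'` is `(λ, μ)`-regular iff there is `ν` such that `D` is
`(ν, μ)`-regular and `D'` is `(λ, ν')`-regular for every infinite `ν' < ν`.
In particular, `D × D'` is `(λ, λ)`-regular iff `D` or `D'` is `(λ, λ)`-regular. -/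
theorem stmt15 {I I' : Type u} (D : Ultrafilter I) (D' : Ultrafilter I')
    (lam mu : Cardinal.{u}) (hlam : ℵ₀ ≤ lam) (hmu : ℵ₀ ≤ mu) :
    (IsRegularUF (uprod D D') lam mu ↔
      ∃ ν : Cardinal.{u}, IsRegularUF D ν mu ∧
        ∀ ν', ℵ₀ ≤ ν' → ν' < ν → IsRegularUF D' lam ν') ∧
    (IsRegularUF (uprod D D') lam lam ↔
      IsRegularUF D lam lam ∨ IsRegularUF D' lam lam) := by
  refine ⟨main D D' lam mu hlam, ?_, ?_⟩
  · intro h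
    obtain ⟨ν, hD, hD'⟩ := (main D D' lam lam hlam).1 h
    rcases lt_or_ge lam ν with h1 | h2
    · exact Or.inr (hD' lam hlam h1)
    · exact Or.inl (regular_mono_left h2 hD)
  · rintro (⟨Y, hm, hi⟩ | ⟨Wf, hm, hi⟩)
    · refine ⟨fun β => {p | p.1 ∈ Y β}, fun β => ?_, fun B hB => ?_⟩
      · rw [mem_uprod]
        exact (D : Filter I).mem_of_superset (hm β) fun i hiY => Filter.univ_mem' fun _ => hiY
      · refine Set.eq_empty_of_subset_empty fun p hp => ?_
        have : p.1 ∈ ⋂ β ∈ B, Y β := Set.mem_iInter₂.2 fun β hβ => Set.mem_iInter₂.1 hp β hβ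
        rw [hi B hB] at this; exact this
    · refine ⟨fun β => {p | p.2 ∈ Wf β}, fun β => ?_, fun B hB => ?_⟩
      · rw [mem_uprod]
        exact Filter.univ_mem' fun i => hm β
      · refine Set.eq_empty_of_subset_empty fun p hp => ?_
        have : p.2 ∈ ⋂ β ∈ B, Wf β := Set.mem_iInter₂.2 fun β hβ => Set.mem_iInter₂.1 hp β hβ
        rw [hi B hB] at this; exact this


end Paper
end

section
/- Let D be an ultrafilter on a set I and, for each i ∈ I, let D_i be an ultrafilter on a set I_i. Then for every infinite cardinal λ, the D-sum ∑_D D_i is (λ, λ)-regular if and only if either D is (λ, λ)-regular or {i ∈ I : D_i is (λ, λ)-regular} ∈ D. -/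
universe u

open Cardinal

namespace Paper

open Set in
lemma regAux {α : Type u} {lam : Cardinal.{u}} (X : lam.out → Set α) :
    (∀ B : Set lam.out, #B = lam → ⋂ β ∈ B, X β = ∅) ↔
      ∀ p : α, #{β | p ∈ X β} < lam := by
  constructor
  · intro h p
    by_contra hlt
    push_neg at hlt
    obtain ⟨B, hBsub, hB⟩ := Cardinal.le_mk_iff_exists_subset.mp hlt
    have hE := h B hB
    have hp : p ∈ ⋂ β ∈ B, X β := by
      simp only [Set.mem_iInter]
      exact fun β hβ => hBsub hβ
    rw [hE] at hp
    exact hp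
  · intro h B hB
    rw [Set.eq_empty_iff_forall_notMem]
    intro p hp
    simp only [Set.mem_iInter] at hp
    have hsub : B ⊆ {β | p ∈ X β} := fun β hβ => hp β hβ
    have hle := Cardinal.mk_le_mk_of_subset hsub
    rw [hB] at hle
    exact absurd (lt_of_le_of_lt hle (h p)) (lt_irrefl _)

lemma mem_usum {I : Type u} {J : I → Type u} (D : Ultrafilter I) (Di : ∀ i, Ultrafilter (J i))
    (s : Set (Σ i, J i)) :
    s ∈ usum D Di ↔ {i | {j | (⟨i, j⟩ : Σ i, J i) ∈ s} ∈ Di i} ∈ D := by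
  have h1 : (↑(usum D Di) : Filter (Σ i, J i)) =
      Filter.bind ↑D fun i => Filter.map (Sigma.mk i) ↑(Di i) := rfl
  rw [← Ultrafilter.mem_coe, h1, Filter.mem_bind']
  simp only [Filter.mem_map, Ultrafilter.mem_coe]
  rfl

lemma nonempty_of_mk_eq {α : Type u} {B : Set α} {lam : Cardinal.{u}} (hlam : ℵ₀ ≤ lam)
    (h : #B = lam) : B.Nonempty := by
  rw [← Set.nonempty_coe_sort, ← Cardinal.mk_ne_zero_iff, h]
  exact ne_of_gt (lt_of_lt_of_le Cardinal.aleph0_pos hlam)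

/-- Proposition 7.4(d): `∑_D D_i` is `(λ, λ)`-regular iff either `D` is
`(λ, λ)`-regular or `{i : D_i is (λ, λ)-regular} ∈ D`. -/
theorem stmt17 {I : Type u} {J : I → Type u} (D : Ultrafilter I)
    (Di : ∀ i, Ultrafilter (J i)) (lam : Cardinal.{u}) (hlam : ℵ₀ ≤ lam) :
    IsRegularUF (usum D Di) lam lam ↔
      IsRegularUF D lam lam ∨ { i | IsRegularUF (Di i) lam lam } ∈ D := by
  constructor
  · intro h
    by_contra hc
    push_neg at hc
    obtain ⟨hD, hA⟩ := hc
    obtain ⟨Y, hYmem, hYint⟩ := h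
    have hYsmall := (regAux Y).mp hYint
    have hAc : {i | IsRegularUF (Di i) lam lam}ᶜ ∈ D :=
      Ultrafilter.compl_mem_iff_notMem.mpr hA
    set X : lam.out → Set I := fun β =>
      {i | {j | (⟨i, j⟩ : Σ i, J i) ∈ Y β} ∈ Di i} ∩ {i | IsRegularUF (Di i) lam lam}ᶜ
      with hXdef
    have hXmem : ∀ β, X β ∈ D := fun β =>
      Filter.inter_mem ((mem_usum D Di (Y β)).mp (hYmem β)) hAc
    rw [IsRegularUF] at hD
    push_neg at hD
    obtain ⟨B, hB, hne⟩ := hD X hXmem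
    obtain ⟨i₀, hi₀⟩ := hne
    simp only [Set.mem_iInter] at hi₀
    obtain ⟨β₀, hβ₀⟩ := nonempty_of_mk_eq hlam hB
    have hnotreg : ¬ IsRegularUF (Di i₀) lam lam := (hi₀ β₀ hβ₀).2
    have hmkeq : #(lam.out) = #B := (Cardinal.mk_out lam).trans hB.symm
    obtain ⟨e⟩ := Cardinal.eq.mp hmkeq
    set W : lam.out → Set (J i₀) := fun γ => {j | (⟨i₀, j⟩ : Σ i, J i) ∈ Y ↑(e γ)} with hWdef
    have hWmem : ∀ γ, W γ ∈ Di i₀ := fun γ => (hi₀ ↑(e γ) (e γ).2).1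
    have hWsmall : ∀ j, #{γ | j ∈ W γ} < lam := by
      intro j
      have hinj : Function.Injective
          (fun γ : {γ | j ∈ W γ} => (⟨↑(e ↑γ), γ.2⟩ : {β | (⟨i₀, j⟩ : Σ i, J i) ∈ Y β})) := by
        intro a b hab
        have h2 : ((e ↑a : ↥B) : lam.out) = ((e ↑b : ↥B) : lam.out) := by
          simpa [Subtype.ext_iff] using hab
        exact Subtype.ext (e.injective (Subtype.ext h2))
      exact lt_of_le_of_lt (Cardinal.mk_le_of_injective hinj) (hYsmall ⟨i₀, j⟩)
    exact hnotreg ⟨W, hWmem, (regAux W).mpr hWsmall⟩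
  · rintro (⟨X, hXmem, hXint⟩ | hA)
    · refine ⟨fun β => {p | p.1 ∈ X β}, fun β => ?_, ?_⟩
      · rw [mem_usum]
        refine Filter.mem_of_superset (hXmem β) fun i hi => ?_
        have : {j : J i | (⟨i, j⟩ : Σ i, J i).1 ∈ X β} = Set.univ :=
          Set.eq_univ_of_forall fun _ => hi
        simp only [Set.mem_setOf_eq, this]
        exact Filter.univ_mem
      · intro B hB
        rw [Set.eq_empty_iff_forall_notMem]
        intro p hp
        simp only [Set.mem_iInter, Set.mem_setOf_eq] at hp
        have : p.1 ∈ ⋂ β ∈ B, X β := Set.mem_iInter₂.mpr fun β hβ => hp β hβ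
        rw [hXint B hB] at this
        exact this
    · classical
      set F : ∀ i, lam.out → Set (J i) := fun i =>
        if h : IsRegularUF (Di i) lam lam then h.choose else fun _ => Set.univ with hFdef
      have hF1 : ∀ i, IsRegularUF (Di i) lam lam → ∀ β, F i β ∈ Di i := by
        intro i h β
        simp only [hFdef, dif_pos h]
        exact h.choose_spec.1 β
      have hF2 : ∀ i, IsRegularUF (Di i) lam lam →
          ∀ B : Set lam.out, #B = lam → ⋂ β ∈ B, F i β = ∅ := by
        intro i h B hB
        simp only [hFdef, dif_pos h]
        exact h.choose_spec.2 B hB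
      refine ⟨fun β => {p : Σ i, J i | IsRegularUF (Di p.1) lam lam ∧ p.2 ∈ F p.1 β},
        fun β => ?_, ?_⟩
      · rw [mem_usum]
        refine Filter.mem_of_superset hA fun i hi => ?_
        have hset : {j : J i | IsRegularUF (Di i) lam lam ∧ j ∈ F i β} = F i β :=
          Set.ext fun j => and_iff_right hi
        simp only [Set.mem_setOf_eq]
        rw [hset]
        exact hF1 i hi β
      · intro B hB
        rw [Set.eq_empty_iff_forall_notMem]
        intro p hp
        simp only [Set.mem_iInter, Set.mem_setOf_eq] at hp
        obtain ⟨β₀, hβ₀⟩ := nonempty_of_mk_eq hlam hB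
        have hreg : IsRegularUF (Di p.1) lam lam := (hp β₀ hβ₀).1
        have : p.2 ∈ ⋂ β ∈ B, F p.1 β := Set.mem_iInter₂.mpr fun β hβ => (hp β hβ).2
        rw [hF2 p.1 hreg B hB] at this
        exact this

end Paper
end

section
/- Let D be a (λ, μ)-regular κ-complete ultrafilter (λ, μ, κ infinite cardinals). Then D is ((λ^{<κ})⁺, μ^{<κ})-regular. Moreover, if ν^{<κ} < λ^{<κ} for every cardinal ν < λ, then D is (λ^{<κ}, μ^{<κ})-regular. -/
universe u

open Cardinal

namespace Paper

private lemma aux_two_lt_aleph0 : (2 : Cardinal.{u}) < ℵ₀ := by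
  exact_mod_cast Cardinal.nat_lt_aleph0 2

private lemma aux_powerlt_mono_base {κ a b : Cardinal.{u}} (h : a ≤ b) :
    a ^< κ ≤ b ^< κ := by
  rw [Cardinal.powerlt_le]
  intro x hx
  exact (Cardinal.power_le_power_right h).trans (Cardinal.le_powerlt _ hx)

private lemma aux_le_powerlt_self {κ : Cardinal.{u}} (a : Cardinal.{u}) (hκ : ℵ₀ ≤ κ) :
    a ≤ a ^< κ := by
  have h1 : (1 : Cardinal.{u}) < κ := lt_of_lt_of_le Cardinal.one_lt_aleph0 hκ
  simpa [Cardinal.power_one] using Cardinal.le_powerlt a h1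

private lemma aux_kappa_le_powerlt {κ a : Cardinal.{u}} (hκ : ℵ₀ ≤ κ) (ha : 2 ≤ a) :
    κ ≤ a ^< κ := by
  by_contra hcon
  push_neg at hcon
  have : a ^< κ < a ^< κ :=
    lt_of_lt_of_le (Cardinal.cantor _)
      ((Cardinal.power_le_power_right ha).trans (Cardinal.le_powerlt a hcon))
  exact this.false

private lemma aux_mk_small_subsets {κ : Cardinal.{u}} (hκ : ℵ₀ ≤ κ) (W : Type u) :
    #{ t : Set W // #t < κ } ≤ (max #W 2) ^< κ := by
  rcases lt_or_ge #W κ with hW | hW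
  · calc #{ t : Set W // #t < κ } ≤ #(Set W) := Cardinal.mk_subtype_le _
      _ = 2 ^ #W := Cardinal.mk_set
      _ ≤ (max #W 2) ^ #W := Cardinal.power_le_power_right (le_max_right _ _)
      _ ≤ (max #W 2) ^< κ := Cardinal.le_powerlt _ hW
  · have hWinf : ℵ₀ ≤ #W := hκ.trans hW
    have h2W : (2 : Cardinal.{u}) ≤ #W := (aux_two_lt_aleph0.le).trans hWinf
    have hmax : max #W 2 = #W := max_eq_left h2W
    set E : κ.ord.ToType → Ordinal.{u} := fun α => ((Ordinal.ToType.mk (o := κ.ord)).symm α).1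
      with hEdef
    have key : #{ t : Set W // #t < κ } ≤
        #(Σ α : κ.ord.ToType, { t : Set W // #t ≤ (E α).card }) := by
      refine Cardinal.mk_le_of_injective (f := fun t =>
        ⟨Ordinal.ToType.mk (o := κ.ord) ⟨(#t.1).ord,
            Set.mem_Iio.2 (Cardinal.ord_lt_ord.2 t.2)⟩,
         ⟨t.1, by simp [hEdef, Cardinal.card_ord]⟩⟩) ?_
      intro t t' h
      exact Subtype.ext (congrArg (fun p => p.2.1) h)
    refine key.trans ?_
    rw [Cardinal.mk_sigma, hmax]
    have hstep : (Cardinal.sum fun α : κ.ord.ToType =>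
        #{ t : Set W // #t ≤ (E α).card }) ≤
        Cardinal.sum (fun _ : κ.ord.ToType => #W ^< κ) := by
      apply Cardinal.sum_le_sum
      intro α
      calc #{ t : Set W // #t ≤ (E α).card }
          ≤ max #W ℵ₀ ^ (E α).card := Cardinal.mk_bounded_set_le _ _
        _ = #W ^ (E α).card := by rw [max_eq_left hWinf]
        _ ≤ #W ^< κ := Cardinal.le_powerlt _
            (Cardinal.lt_ord.1 (Set.mem_Iio.1 ((Ordinal.ToType.mk (o := κ.ord)).symm α).2))
    refine hstep.trans ?_
    rw [Cardinal.sum_const', Cardinal.mk_toType, Cardinal.card_ord]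
    have hκle : κ ≤ #W ^< κ := hW.trans (aux_le_powerlt_self _ hκ)
    have hinf : ℵ₀ ≤ #W ^< κ := hWinf.trans (aux_le_powerlt_self _ hκ)
    rw [Cardinal.mul_eq_max hκ hinf, max_eq_right hκle]

private lemma aux_powerlt_le_mk {κ mu : Cardinal.{u}} (hmu : ℵ₀ ≤ mu) (hκmu : κ ≤ mu) :
    mu ^< κ ≤ #{ s : Set mu.out // #s < κ } := by
  rw [Cardinal.powerlt_le]
  intro x hx
  have hxmu : x ≤ mu := le_of_lt (lt_of_lt_of_le hx hκmu)
  obtain ⟨e⟩ : Nonempty (x.out × mu.out ↪ mu.out) := by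
    rw [← Cardinal.le_def]
    calc #(x.out × mu.out) = x * mu := by
          rw [Cardinal.mk_prod, Cardinal.mk_out, Cardinal.mk_out,
            Cardinal.lift_id, Cardinal.lift_id]
      _ ≤ mu * mu := mul_le_mul_left hxmu _
      _ = mu := Cardinal.mul_eq_self hmu
      _ = #mu.out := (Cardinal.mk_out mu).symm
  have hpow : mu ^ x = #(x.out → mu.out) := by
    have := Cardinal.power_def mu.out x.out
    simp only [Cardinal.mk_out] at this
    exact this
  rw [hpow]
  refine Cardinal.mk_le_of_injective (f := fun g =>
    (⟨Set.range (fun a => e (a, g a)),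
      lt_of_le_of_lt Cardinal.mk_range_le (by rw [Cardinal.mk_out]; exact hx)⟩ :
      { s : Set mu.out // #s < κ })) ?_
  intro g g' h
  funext a
  have hsets : Set.range (fun a => e (a, g a)) = Set.range (fun a => e (a, g' a)) :=
    congrArg Subtype.val h
  have hmem : e (a, g a) ∈ Set.range (fun a => e (a, g' a)) := by
    rw [← hsets]; exact ⟨a, rfl⟩
  obtain ⟨a', ha'⟩ := hmem
  have hpair : (a', g' a') = (a, g a) := e.injective ha'
  simp only [Prod.mk.injEq] at hpair
  obtain ⟨h1, h2⟩ := hpair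
  rw [h1] at h2
  exact h2.symm

/-- Proposition 8.6: if `D` is `(λ, μ)`-regular and `κ`-complete, then `D` is
`((λ^{<κ})⁺, μ^{<κ})`-regular; moreover, if `ν^{<κ} < λ^{<κ}` for every `ν < λ`,
then `D` is `(λ^{<κ}, μ^{<κ})`-regular. -/
theorem stmt18 {I : Type u} (D : Ultrafilter I) (lam mu κ : Cardinal.{u})
    (hlam : ℵ₀ ≤ lam) (hmu : ℵ₀ ≤ mu) (hκ : ℵ₀ ≤ κ)
    (hreg : IsRegularUF D lam mu) (hcomp : IsComplete D κ) :
    IsRegularUF D (Order.succ (lam ^< κ)) (mu ^< κ) ∧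
      ((∀ ν < lam, ν ^< κ < lam ^< κ) → IsRegularUF D (lam ^< κ) (mu ^< κ)) := by
  classical
  have h2lam : (2 : Cardinal.{u}) ≤ lam := aux_two_lt_aleph0.le.trans hlam
  by_cases hlm : lam ≤ mu
  · obtain ⟨X, hXD, hXint⟩ := hreg
    have hκlam : κ ≤ lam := by
      by_contra hc
      push_neg at hc
      obtain ⟨s, hs⟩ := Cardinal.le_mk_iff_exists_set.1
        (show lam ≤ #mu.out by rw [Cardinal.mk_out]; exact hlm)
      have h1 : ⋂₀ (X '' s) ∈ D := by
        apply hcomp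
        · exact lt_of_le_of_lt Cardinal.mk_image_le (by rw [hs]; exact hc)
        · rintro _ ⟨β, -, rfl⟩
          exact hXD β
      rw [Set.sInter_image, hXint s hs] at h1
      exact D.empty_notMem h1
    obtain ⟨φ⟩ : Nonempty ((mu ^< κ).out ↪ { s : Set mu.out // #s < κ }) := by
      rw [← Cardinal.le_def, Cardinal.mk_out]
      exact aux_powerlt_le_mk hmu (hκlam.trans hlm)
    set Y : (mu ^< κ).out → Set I := fun b => ⋂₀ (X '' (φ b).1) with hYdef
    have hYD : ∀ b, Y b ∈ D := fun b =>
      hcomp _ (lt_of_le_of_lt Cardinal.mk_image_le (φ b).2)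
        (by rintro _ ⟨β, -, rfl⟩; exact hXD β)
    have key : ∀ (B : Set (mu ^< κ).out) (i : I), (∀ b ∈ B, i ∈ Y b) →
        ∃ ν : Cardinal.{u}, ν < lam ∧ #B ≤ (max ν 2) ^< κ := by
      intro B i hi
      set Z : Set mu.out := { β | i ∈ X β } with hZdef
      have hsub : ∀ b ∈ B, (φ b).1 ⊆ Z := by
        intro b hb β hβ
        exact Set.mem_sInter.1 (hi b hb) (X β) ⟨β, hβ, rfl⟩
      have hν : #Z < lam := by
        by_contra hc
        push_neg at hc
        obtain ⟨t, htZ, ht⟩ := Cardinal.le_mk_iff_exists_subset.1 hc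
        have hit : i ∈ ⋂ β ∈ t, X β := Set.mem_iInter₂.2 fun β hβ => htZ hβ
        rw [hXint t ht] at hit
        exact hit
      refine ⟨#Z, hν, ?_⟩
      have hinj : Function.Injective (fun b : B => (⟨Subtype.val ⁻¹' (φ b.1).1,
          lt_of_le_of_lt (Cardinal.mk_preimage_of_injective _ _ Subtype.coe_injective)
            (φ b.1).2⟩ : { t : Set Z // #t < κ })) := by
        intro b b' h
        have hsets : (Subtype.val ⁻¹' (φ b.1).1 : Set Z) = Subtype.val ⁻¹' (φ b'.1).1 :=
          congrArg Subtype.val h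
        have hvals : (φ b.1).1 = (φ b'.1).1 := by
          ext β
          constructor
          · intro hβ
            have hβZ : β ∈ Z := hsub b.1 b.2 hβ
            have : (⟨β, hβZ⟩ : Z) ∈ Subtype.val ⁻¹' (φ b'.1).1 := by
              rw [← hsets]; exact hβ
            exact this
          · intro hβ
            have hβZ : β ∈ Z := hsub b'.1 b'.2 hβ
            have : (⟨β, hβZ⟩ : Z) ∈ Subtype.val ⁻¹' (φ b.1).1 := by
              rw [hsets]; exact hβ
            exact this
        exact Subtype.ext (φ.injective (Subtype.ext hvals))
      calc #B ≤ #{ t : Set Z // #t < κ } := Cardinal.mk_le_of_injective hinj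
        _ ≤ (max #(Z : Set mu.out) 2) ^< κ := aux_mk_small_subsets hκ _
    constructor
    · refine ⟨Y, hYD, ?_⟩
      intro B hB
      rw [Set.eq_empty_iff_forall_notMem]
      intro i hi
      obtain ⟨ν, hνlam, hBle⟩ := key B i (fun b hb => Set.mem_iInter₂.1 hi b hb)
      have hle : (max ν 2) ^< κ ≤ lam ^< κ :=
        aux_powerlt_mono_base (max_le hνlam.le h2lam)
      rw [hB] at hBle
      exact (Order.lt_succ (lam ^< κ)).not_ge (hBle.trans hle)
    · intro h2
      refine ⟨Y, hYD, ?_⟩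
      intro B hB
      rw [Set.eq_empty_iff_forall_notMem]
      intro i hi
      obtain ⟨ν, hνlam, hBle⟩ := key B i (fun b hb => Set.mem_iInter₂.1 hi b hb)
      have hlt : (max ν 2) ^< κ < lam ^< κ :=
        h2 _ (max_lt hνlam (lt_of_lt_of_le aux_two_lt_aleph0 hlam))
      rw [hB] at hBle
      exact hlt.not_ge hBle
  · push_neg at hlm
    have hBle : ∀ B : Set (mu ^< κ).out, #B ≤ mu ^< κ := fun B => by
      calc #B ≤ #((mu ^< κ).out) := Cardinal.mk_set_le B
        _ = mu ^< κ := Cardinal.mk_out _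
    constructor
    · refine ⟨fun _ => Set.univ, fun _ => Filter.univ_mem, ?_⟩
      intro B hB
      have h1 := hBle B
      rw [hB] at h1
      exact ((Order.lt_succ (lam ^< κ)).not_ge
        (h1.trans (aux_powerlt_mono_base hlm.le))).elim
    · intro h2
      refine ⟨fun _ => Set.univ, fun _ => Filter.univ_mem, ?_⟩
      intro B hB
      have h1 := hBle B
      rw [hB] at h1
      exact ((h2 mu hlm).not_ge h1).elim


end Paper
end

section
/- Let λ, μ, κ be regular cardinals and suppose there is a sequence (f_α)_{α<κ} of functions from λ to μ which is increasing modulo eventual dominance (for all α < β < κ there is γ < λ such that f_α(δ) < f_β(δ) for every δ with γ < δ < λ), and such that no function g : λ → μ eventually dominates all the f_α (i.e. there is no g such that for every α < κ there is γ < λ with f_α(δ) < g(δ) for all δ with γ < δ < λ). Then every (κ, κ)-regular ultrafilter is either (λ, λ)-regular or (μ, μ)-regular. -/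
universe u

open Cardinal

namespace Paper

section Aux

lemma aux_mk_lt_of_bounded {c : Cardinal.{u}} (hc : c.IsRegular) (S : Set c.ord.ToType)
    (γ : c.ord.ToType) (h : ∀ x ∈ S, x ≤ γ) : #S < c := by
  have h1 : #S ≤ #(Set.Iic γ) := Cardinal.mk_le_mk_of_subset h
  refine h1.trans_lt ?_
  have h2 : (Set.Iic γ) = Set.Iio γ ∪ {γ} := by ext x; simp [le_iff_lt_or_eq]
  have h3 : #(Set.Iio γ) < c := Cardinal.mk_Iio_ord_toType γ
  rw [h2]
  refine (Cardinal.mk_union_le (Set.Iio γ) {γ}).trans_lt ?_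
  rw [Cardinal.mk_singleton γ]
  exact Cardinal.add_lt_of_lt hc.aleph0_le h3
    (lt_of_lt_of_le Cardinal.one_lt_aleph0 hc.aleph0_le)

lemma aux_bounded_of_mk_lt {c : Cardinal.{u}} (hc : c.IsRegular) (S : Set c.ord.ToType)
    (h : #S < c) : ∃ γ, ∀ x ∈ S, x < γ := by
  haveI : IsWellOrder c.ord.ToType (· < ·) := isWellOrder_lt
  have h2 : #S < Ordinal.cof (Ordinal.type ((· < ·) : c.ord.ToType → c.ord.ToType → Prop)) := by
    rwa [Ordinal.type_toType, hc.cof_eq]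
  exact not_isCofinal_iff.mp fun hS => (Ordinal.lt_cof_type hS).not_gt (by rwa [Ordinal.cof_type] at h2)

lemma aux_nonempty {c : Cardinal.{u}} (hc : c.IsRegular) : Nonempty c.ord.ToType := by
  rw [← Cardinal.mk_ne_zero_iff, Cardinal.mk_ord_toType]
  exact hc.pos.ne'

/-- An equivalence between the `Quotient.out` of a cardinal and the underlying type
of its initial ordinal. -/
noncomputable def auxEquiv (c : Cardinal.{u}) : c.out ≃ c.ord.ToType := by
  apply Classical.choice
  rw [← Cardinal.eq, Cardinal.mk_out, Cardinal.mk_ord_toType]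

/-- If there is a function `I → c` unbounded modulo `D`, then `D` is `(c,c)`-regular. -/
lemma aux_isRegularUF {I : Type u} (D : Ultrafilter I) {c : Cardinal.{u}} (hc : c.IsRegular)
    (F : I → c.ord.ToType) (hF : ∀ γ, {i | γ < F i} ∈ D) : IsRegularUF D c c := by
  refine ⟨fun b => {i | auxEquiv c b < F i}, fun b => hF _, ?_⟩
  intro B hB
  rw [Set.eq_empty_iff_forall_notMem]
  intro i hi
  simp only [Set.mem_iInter] at hi
  have hsub : auxEquiv c '' B ⊆ Set.Iio (F i) := by
    rintro _ ⟨b, hb, rfl⟩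
    exact hi b hb
  have hlt : #(auxEquiv c '' B) < c :=
    (Cardinal.mk_le_mk_of_subset hsub).trans_lt (Cardinal.mk_Iio_ord_toType _)
  rw [Cardinal.mk_image_eq (auxEquiv c).injective, hB] at hlt
  exact lt_irrefl c hlt

end Aux

/-- Proposition 8.1: if `λ, μ, κ` are regular and there is a sequence
`(f_α)_{α<κ}` of functions `λ → μ`, increasing modulo eventual dominance, not
eventually dominated by any single function, then every `(κ, κ)`-regular
ultrafilter is either `(λ, λ)`-regular or `(μ, μ)`-regular. -/
theorem stmt19 {I : Type u} (D : Ultrafilter I) (lam mu κ : Cardinal.{u})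
    (hlam : lam.IsRegular) (hmu : mu.IsRegular) (hκ : κ.IsRegular)
    (f : κ.ord.ToType → lam.ord.ToType → mu.ord.ToType)
    (hinc : ∀ α β, α < β → ∃ γ, ∀ δ, γ < δ → f α δ < f β δ)
    (hnodom : ¬ ∃ g : lam.ord.ToType → mu.ord.ToType,
        ∀ α, ∃ γ, ∀ δ, γ < δ → f α δ < g δ)
    (hreg : IsRegularUF D κ κ) :
    IsRegularUF D lam lam ∨ IsRegularUF D mu mu := by
  classical
  obtain ⟨X, hX1, hX2⟩ := hreg
  haveI : Nonempty lam.ord.ToType := aux_nonempty hlam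
  set eκ := auxEquiv κ with heκ
  -- Step 1: an unbounded-mod-D function g : I → κ
  have hbound : ∀ i : I, ∃ γ, ∀ β ∈ {β : κ.ord.ToType | i ∈ X (eκ.symm β)}, β < γ := by
    intro i
    apply aux_bounded_of_mk_lt hκ
    by_contra hlt
    have h1 : #{β : κ.ord.ToType | i ∈ X (eκ.symm β)} ≤ κ := by
      refine (Cardinal.mk_le_mk_of_subset (Set.subset_univ _)).trans_eq ?_
      rw [Cardinal.mk_univ, Cardinal.mk_ord_toType]
    have heq : #{β : κ.ord.ToType | i ∈ X (eκ.symm β)} = κ := le_antisymm h1 (not_lt.mp hlt)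
    have hBκ : #(eκ.symm '' {β : κ.ord.ToType | i ∈ X (eκ.symm β)}) = κ := by
      rw [Cardinal.mk_image_eq eκ.symm.injective, heq]
    have hmem : i ∈ ⋂ b ∈ eκ.symm '' {β : κ.ord.ToType | i ∈ X (eκ.symm β)}, X b := by
      refine Set.mem_iInter₂.mpr ?_
      rintro _ ⟨β, hβ, rfl⟩
      exact hβ
    rw [hX2 _ hBκ] at hmem
    exact hmem
  choose g hg' using hbound
  have hg : ∀ α, {i | α < g i} ∈ D := fun α =>
    Filter.mem_of_superset (hX1 (eκ.symm α)) (fun i hi => hg' i α hi)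
  -- Step 2: case split on whether every column is bounded mod D
  by_cases hcase : ∀ γ : lam.ord.ToType, ∃ β : mu.ord.ToType, {i | f (g i) γ ≤ β} ∈ D
  · -- every column bounded: build k and use hnodom to get (λ,λ)-regularity
    choose k hk using hcase
    push_neg at hnodom
    obtain ⟨α₀, hα₀⟩ := hnodom k
    choose G hG using hinc
    set h : I → lam.ord.ToType :=
      fun i => if hi : α₀ < g i then G α₀ (g i) hi else Classical.arbitrary _ with hh_def
    have hh : ∀ γ, {i | γ < h i} ∈ D := by
      intro γ
      by_contra hcon
      have hcompl : {i | h i ≤ γ} ∈ D := by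
        have hc2 := (Ultrafilter.compl_mem_iff_notMem (s := {i | γ < h i}) (f := D)).mpr hcon
        convert hc2 using 1
        ext i; simp [not_lt]
      obtain ⟨δ, hγδ, hkδ⟩ := hα₀ γ
      have hall : {i | h i ≤ γ} ∩ ({i | α₀ < g i} ∩ {i | f (g i) δ ≤ k δ}) ∈ D :=
        Filter.inter_mem hcompl (Filter.inter_mem (hg α₀) (hk δ))
      obtain ⟨i, h1, h2, h3⟩ := Ultrafilter.nonempty_of_mem hall
      have hhi : h i = G α₀ (g i) h2 := by simp only [hh_def]; exact dif_pos h2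
      have hlt2 : f α₀ δ < f (g i) δ := by
        refine hG α₀ (g i) h2 δ ?_
        rw [← hhi]
        exact lt_of_le_of_lt h1 hγδ
      exact absurd ((hlt2.trans_le h3).trans_le hkδ) (lt_irrefl _)
    exact Or.inl (aux_isRegularUF D hlam h hh)
  · -- some column unbounded mod D: (μ,μ)-regularity
    push_neg at hcase
    obtain ⟨γ, hγ⟩ := hcase
    refine Or.inr (aux_isRegularUF D hmu (fun i => f (g i) γ) ?_)
    intro β
    have hc2 := (Ultrafilter.compl_mem_iff_notMem (s := {i | f (g i) γ ≤ β}) (f := D)).mpr (hγ β)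
    convert hc2 using 1
    ext i; simp [not_le]


end Paper
end
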